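/- arXiv:1508.00667 — 13 statements merged into one kernel-verified Lean document; each statement's English description precedes it below -/
import Mathlib

section
/- Every topologically independent subset of an abelian topological group is independent. -/
open Filter Topology

section Defs
variable {G : Type*} [AddCommGroup G] [TopologicalSpace G]

/-- A set `A` in a topological abelian group is *topologically independent* if `0 ∉ A` and
for every neighbourhood `W` of `0` there is a neighbourhood `U` of `0` such that whenever a
finite integer combination of elements of `A` lies in `U`, each of its terms lies in `W`. -/
def TopIndep (A : Set G) : Prop :=
  (0 : G) ∉ A ∧ ∀ W ∈ 𝓝 (0 : G), ∃ U ∈ 𝓝 (0 : G),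
    ∀ F : Finset G, ↑F ⊆ A → ∀ z : G → ℤ,
      (∑ a ∈ F, z a • a) ∈ U → ∀ a ∈ F, z a • a ∈ W

/-- Algebraic independence of a subset of an abelian group. -/
def Indep (A : Set G) : Prop :=
  (0 : G) ∉ A ∧ ∀ F : Finset G, ↑F ⊆ A → ∀ z : G → ℤ,
    (∑ a ∈ F, z a • a) = 0 → ∀ a ∈ F, z a • a = 0

/-- `A` is absolutely Cauchy summable: every neighbourhood of `0` contains the subgroup
generated by `A \ F` for some finite `F ⊆ A`. -/
def AbsCauchySummable (A : Set G) : Prop :=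
  ∀ U ∈ 𝓝 (0 : G), ∃ F : Finset G, ↑F ⊆ A ∧
    (AddSubgroup.closure (A \ ↑F) : Set G) ⊆ U

/-- `A` is absolutely summable: for every integer family the net of finite partial sums
converges. -/
def AbsSummable (A : Set G) : Prop :=
  ∀ z : A → ℤ, ∃ g : G, HasSum (fun a : A => z a • (a : G)) g

end Defs

/-- The direct sum `⊕_i H i`, realized as the subgroup of the product `Π i, H i`
consisting of finitely supported elements; it carries the topology inherited from the
Tychonoff product topology. -/
def FinSupp (ι : Type*) (H : ι → Type*) [∀ i, AddCommGroup (H i)] :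
    AddSubgroup (Π i, H i) where
  carrier := {f | {i | f i ≠ 0}.Finite}
  zero_mem' := by simp
  add_mem' := by
    intro f g hf hg
    refine (hf.union hg).subset fun i hi => ?_
    by_contra h
    simp only [Set.mem_union, Set.mem_setOf_eq, not_or, not_not] at h
    exact hi (by simp [h.1, h.2])
  neg_mem' := by
    intro f hf
    refine hf.subset fun i hi => ?_
    simp only [Set.mem_setOf_eq] at hi ⊢
    simpa using hi

/-- The Kalton map `κ_A : S_A = ⊕_{a ∈ A} ⟨a⟩ → G`, sending a finitely supported family to
the sum of its components. -/
noncomputable def kalton {G : Type*} [AddCommGroup G] (A : Set G)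
    (f : FinSupp A (fun a => AddSubgroup.zmultiples (a : G))) : G :=
  ∑ᶠ a : A, ((f.1 a : G))

section Sing
variable {ι : Type*} [DecidableEq ι] {H : ι → Type*} [∀ i, AddCommGroup (H i)]

/-- The element of the direct sum supported at `i` with value `x`. -/
def sing (i : ι) (x : H i) : FinSupp ι H :=
  ⟨Pi.single i x, (Set.finite_singleton i).subset (by
    intro b hb
    simp only [Set.mem_setOf_eq] at hb
    by_contra hba
    exact hb (Pi.single_eq_of_ne (by simpa using hba) x))⟩

end Sing

theorem stmt0 {G : Type*} [AddCommGroup G] [TopologicalSpace G] [IsTopologicalAddGroup G]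
    [T2Space G] (A : Set G) (hA : TopIndep A) : Indep A := by
  refine ⟨hA.1, fun F hF z hsum a ha => ?_⟩
  by_contra hne
  have hW : ({z a • a}ᶜ : Set G) ∈ 𝓝 (0 : G) :=
    (isOpen_compl_singleton).mem_nhds (by simpa using fun h => hne h.symm)
  obtain ⟨U, hU, hP⟩ := hA.2 _ hW
  exact hP F hF z (hsum ▸ mem_of_mem_nhds hU) a ha rfl
end

section
/- For every n ∈ ℕ, each topologically independent subset of ℝⁿ has cardinality at most n. -/
open Filter Topology

open Submodule Module

lemma discreteOfSmall {E : Type*} [NormedAddCommGroup E] [Module ℤ E] (L : Submodule ℤ E)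
    {ε : ℝ} (hε : 0 < ε) (h : ∀ x ∈ L, ‖x‖ < ε → x = 0) : DiscreteTopology L := by
  refine discreteTopology_iff_isOpen_singleton.mpr fun x => ?_
  have : ({x} : Set L) = Subtype.val ⁻¹' Metric.ball (x : E) ε := by
    ext y
    simp only [Set.mem_singleton_iff, Set.mem_preimage, Metric.mem_ball, dist_eq_norm]
    constructor
    · rintro rfl; simpa using hε
    · intro hy
      have := h ((y : E) - (x : E)) (L.sub_mem y.2 x.2) hy
      exact Subtype.ext (sub_eq_zero.mp this)
  rw [this]
  exact Metric.isOpen_ball.preimage continuous_subtype_val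

lemma exists_small_comb {n m : ℕ} (hm : n < m) (v : Fin m → (Fin n → ℝ))
    {U : Set (Fin n → ℝ)} (hU : U ∈ 𝓝 0) :
    ∃ z : Fin m → ℤ, z ≠ 0 ∧ (∑ i, z i • v i) ∈ U := by
  by_contra hcon
  push_neg at hcon
  obtain ⟨ε, hε, hball⟩ := Metric.mem_nhds_iff.mp hU
  -- the vectors are ℤ-linearly independent
  have hind : LinearIndependent ℤ v := by
    rw [Fintype.linearIndependent_iff]
    intro g hg
    by_contra hg'
    push_neg at hg'
    obtain ⟨i, hi⟩ := hg'
    have hgne : g ≠ 0 := fun h0 => hi (congrFun h0 i)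
    exact hcon g hgne (hg ▸ mem_of_mem_nhds hU)
  -- work inside the real span
  set E' := Submodule.span ℝ (Set.range v) with hE'
  let u : Fin m → E' := fun i => ⟨v i, Submodule.subset_span ⟨i, rfl⟩⟩
  have hsu : (E'.subtype) ∘ u = v := rfl
  have hindu : LinearIndependent ℤ u :=
    LinearIndependent.of_comp ((E'.subtype).restrictScalars ℤ) (by rwa [show ⇑((E'.subtype).restrictScalars ℤ) ∘ u = v from rfl])
  set L' : Submodule ℤ E' := Submodule.span ℤ (Set.range u) with hL'
  -- discreteness
  have hdisc : DiscreteTopology L' := by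
    refine discreteOfSmall L' hε fun x hx hxn => ?_
    obtain ⟨z, hz⟩ := (mem_span_range_iff_exists_fun ℤ).mp hx
    by_cases h0 : z = 0
    · rw [← hz, h0]; simp
    · exfalso
      have hxv : (x : Fin n → ℝ) = ∑ i, z i • v i := by
        rw [← hz]; push_cast [Submodule.coe_sum]; rfl
      refine hcon z h0 ?_
      rw [← hxv]
      exact hball (by simpa [Metric.mem_ball, dist_eq_norm] using hxn)
  -- ZLattice
  have hzl : IsZLattice ℝ L' := by
    constructor
    have hmap : Submodule.map E'.subtype (Submodule.span ℝ (Set.range u)) = E' := by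
      rw [Submodule.map_span]
      have : E'.subtype '' Set.range u = Set.range v := by
        rw [← Set.range_comp, hsu]
      rw [this, ← hE']
    have hmapl : Submodule.map E'.subtype (Submodule.span ℝ ((L' : Set E'))) =
        Submodule.map E'.subtype (⊤ : Submodule ℝ E') := by
      rw [Submodule.map_top, Submodule.range_subtype, hL']
      rw [Submodule.span_span_of_tower, hmap]
    exact Submodule.map_injective_of_injective (Submodule.injective_subtype E') hmapl
  haveI : ProperSpace E' := FiniteDimensional.proper ℝ E'
  have hrank := ZLattice.rank ℝ L'
  haveI : Module.Finite ℤ L' := ZLattice.module_finite ℝ L'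
  -- lower bound
  let w : Fin m → L' := fun i => ⟨u i, Submodule.subset_span ⟨i, rfl⟩⟩
  have hindw : LinearIndependent ℤ w :=
    LinearIndependent.of_comp (L'.subtype) (by rwa [show ⇑(L'.subtype) ∘ w = u from rfl])
  have h1 : m ≤ finrank ℤ L' := by
    simpa using hindw.fintype_card_le_finrank
  have h2 : finrank ℝ E' ≤ n := by
    have := Submodule.finrank_le E'
    simpa using this
  omega

theorem stmt1 (n : ℕ) (A : Set (Fin n → ℝ)) (hA : TopIndep A) :
    Cardinal.mk A ≤ n := by
  by_contra hcard
  push_neg at hcard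
  have hle : (Cardinal.mk (Fin (n + 1)) : Cardinal) ≤ Cardinal.mk A := by
    rw [Cardinal.mk_fin]
    exact_mod_cast (Cardinal.nat_succ n ▸ Order.succ_le_of_lt hcard)
  obtain ⟨f⟩ := Cardinal.le_def _ _ |>.mp hle
  let v : Fin (n + 1) → (Fin n → ℝ) := fun i => (f i : Fin n → ℝ)
  have hvinj : Function.Injective v := Subtype.coe_injective.comp f.injective
  have hvA : ∀ i, v i ∈ A := fun i => (f i).2
  obtain ⟨h0, hI⟩ := hA
  have hvne : ∀ i, v i ≠ 0 := fun i hv0 => h0 (hv0 ▸ hvA i)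
  -- minimum of the norms
  obtain ⟨ε, hεmem, hεmin⟩ := Finset.exists_min_image Finset.univ (fun i => ‖v i‖)
    ⟨0, Finset.mem_univ 0⟩
  have hε : 0 < ‖v ε‖ := norm_pos_iff.mpr (hvne ε)
  -- apply topological independence with W = ball 0 ‖v ε‖
  obtain ⟨U, hU, hUW⟩ := hI (Metric.ball 0 ‖v ε‖) (Metric.ball_mem_nhds 0 hε)
  obtain ⟨z, hz0, hzU⟩ := exists_small_comb (Nat.lt_succ_self n) v hU
  -- build the finset and coefficient function
  classical
  set F : Finset (Fin n → ℝ) := Finset.univ.image v with hF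
  set z' : (Fin n → ℝ) → ℤ := Function.extend v z 0 with hz'
  have hzv : ∀ i, z' (v i) = z i := fun i => hvinj.extend_apply z 0 i
  have hsum : (∑ a ∈ F, z' a • a) = ∑ i, z i • v i := by
    rw [hF, Finset.sum_image (fun i _ j _ h => hvinj h)]
    exact Finset.sum_congr rfl fun i _ => by rw [hzv]
  have hFA : (F : Set (Fin n → ℝ)) ⊆ A := by
    intro a ha
    simp only [hF, Finset.coe_image, Set.mem_image] at ha
    obtain ⟨i, _, rfl⟩ := ha
    exact hvA i
  have hall := hUW F hFA z' (hsum ▸ hzU)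
  -- pick a nonzero coefficient
  obtain ⟨i, hi⟩ : ∃ i, z i ≠ 0 := by
    by_contra hc; push_neg at hc
    exact hz0 (funext hc)
  have hmem : v i ∈ F := Finset.mem_image_of_mem v (Finset.mem_univ i)
  have := hall (v i) hmem
  rw [hzv i] at this
  have hnorm : ‖z i • v i‖ < ‖v ε‖ := by
    simpa [Metric.mem_ball, dist_eq_norm] using this
  have : ‖v i‖ ≤ ‖z i • v i‖ := by
    rw [← Int.cast_smul_eq_zsmul ℝ, norm_smul]
    have h1 : (1 : ℝ) ≤ ‖(z i : ℝ)‖ := by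
      rw [Real.norm_eq_abs, ← Int.cast_abs]
      exact_mod_cast Int.one_le_abs hi
    nlinarith [norm_nonneg (v i)]
  have := hεmin i (Finset.mem_univ i)
  linarith
end

section
/- Every topologically independent subset of ℝ has at most one element, although ℝ contains an (algebraically) independent subset of cardinality continuum. -/
open Filter Topology

theorem stmt2 :
    (∀ A : Set ℝ, TopIndep A → A.Subsingleton) ∧
    (∃ B : Set ℝ, Indep B ∧ Cardinal.mk B = Cardinal.continuum) := by
  constructor
  · -- topological independence forces at most one element
    intro A hA a ha b hb
    by_contra hab
    have ha0 : a ≠ 0 := fun h => hA.1 (h ▸ ha)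
    have hb0 : b ≠ 0 := fun h => hA.1 (h ▸ hb)
    set S : AddSubgroup ℝ := AddSubgroup.zmultiples a ⊔ AddSubgroup.zmultiples b with hS
    have hFsub : (↑({a, b} : Finset ℝ) : Set ℝ) ⊆ A := by
      intro x hx
      simp only [Finset.coe_insert, Finset.coe_singleton, Set.mem_insert_iff,
        Set.mem_singleton_iff] at hx
      rcases hx with rfl | rfl <;> assumption
    rcases AddSubgroup.dense_or_cyclic S with hd | ⟨c, hc⟩
    · -- dense case
      have hmin : (0:ℝ) < min |a| |b| := lt_min (abs_pos.2 ha0) (abs_pos.2 hb0)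
      obtain ⟨U, hU, h⟩ := hA.2 (Metric.ball 0 (min |a| |b|)) (Metric.ball_mem_nhds _ hmin)
      obtain ⟨ε, hε, hεU⟩ := Metric.mem_nhds_iff.1 hU
      have hcl : ((ε/2 : ℝ)) ∈ closure (S : Set ℝ) := hd _
      rcases Metric.mem_closure_iff.1 hcl (ε/2) (by positivity) with ⟨s, hsS, hds⟩
      rw [Real.dist_eq, abs_lt] at hds
      have hs0 : s ≠ 0 := by intro h; rw [h] at hds; linarith [hds.1, hds.2]
      have hsU : s ∈ U := hεU (by
        simp only [Metric.mem_ball, Real.dist_eq, sub_zero, abs_lt]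
        constructor <;> linarith [hds.1, hds.2])
      rcases AddSubgroup.mem_sup.1 hsS with ⟨x, hx, y, hy, hxy⟩
      rcases AddSubgroup.mem_zmultiples_iff.1 hx with ⟨m, hm⟩
      rcases AddSubgroup.mem_zmultiples_iff.1 hy with ⟨n, hn⟩
      set z : ℝ → ℤ := fun t => if t = a then m else n with hz
      have e1 : z a = m := by simp [hz]
      have e2 : z b = n := by simp [hz, Ne.symm hab]
      have hsum : (∑ t ∈ ({a, b} : Finset ℝ), z t • t) = s := by
        rw [Finset.sum_pair hab, e1, e2, hm, hn, hxy]
      have hza : z a • a ∈ Metric.ball (0:ℝ) (min |a| |b|) :=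
        h _ hFsub z (by rw [hsum]; exact hsU) a (by simp)
      have hzb : z b • b ∈ Metric.ball (0:ℝ) (min |a| |b|) :=
        h _ hFsub z (by rw [hsum]; exact hsU) b (by simp)
      rw [e1] at hza
      rw [e2] at hzb
      have hm0 : m = 0 := by
        by_contra hm0
        have h1 : (1:ℝ) ≤ |(m:ℝ)| := by
          rw [← Int.cast_abs]
          exact_mod_cast Int.one_le_abs hm0
        simp only [Metric.mem_ball, Real.dist_eq, sub_zero, zsmul_eq_mul, abs_mul] at hza
        have := lt_of_lt_of_le hza (min_le_left _ _)
        nlinarith [abs_pos.2 ha0]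
      have hn0 : n = 0 := by
        by_contra hn0
        have h1 : (1:ℝ) ≤ |(n:ℝ)| := by
          rw [← Int.cast_abs]
          exact_mod_cast Int.one_le_abs hn0
        simp only [Metric.mem_ball, Real.dist_eq, sub_zero, zsmul_eq_mul, abs_mul] at hzb
        have := lt_of_lt_of_le hzb (min_le_right _ _)
        nlinarith [abs_pos.2 hb0]
      apply hs0
      rw [← hxy, ← hm, ← hn, hm0, hn0, zero_zsmul, zero_zsmul, add_zero]
    · -- cyclic case
      have haS : a ∈ S := AddSubgroup.mem_sup_left (AddSubgroup.mem_zmultiples a)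
      have hbS : b ∈ S := AddSubgroup.mem_sup_right (AddSubgroup.mem_zmultiples b)
      rw [hc, ← AddSubgroup.zmultiples_eq_closure] at haS hbS
      rcases AddSubgroup.mem_zmultiples_iff.1 haS with ⟨p, hp⟩
      rcases AddSubgroup.mem_zmultiples_iff.1 hbS with ⟨q, hq⟩
      have hq0 : q ≠ 0 := fun h => hb0 (by rw [← hq, h, zero_zsmul])
      have hqa : q • a ≠ 0 := by
        rw [zsmul_eq_mul]
        exact mul_ne_zero (Int.cast_ne_zero.2 hq0) ha0
      obtain ⟨U, hU, h⟩ := hA.2 ({q • a}ᶜ)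
        (isOpen_compl_singleton.mem_nhds
          (by rw [Set.mem_compl_singleton_iff]; exact Ne.symm hqa))
      set z : ℝ → ℤ := fun t => if t = a then q else -p with hz
      have e1 : z a = q := by simp [hz]
      have e2 : z b = -p := by simp [hz, Ne.symm hab]
      have hsum : (∑ t ∈ ({a, b} : Finset ℝ), z t • t) = 0 := by
        rw [Finset.sum_pair hab, e1, e2, ← hp, ← hq, smul_smul, smul_smul, ← add_smul,
          show q * p + -p * q = 0 by ring, zero_zsmul]
      have hmem := h _ hFsub z (by rw [hsum]; exact mem_of_mem_nhds hU) a (by simp)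
      rw [e1] at hmem
      exact (Set.mem_compl_singleton_iff.1 hmem) rfl
  · -- a rationally independent set of cardinality continuum
    refine ⟨Module.Basis.ofVectorSpaceIndex ℚ ℝ, ⟨?_, ?_⟩, ?_⟩
    · intro h0
      exact (Module.Basis.ofVectorSpace ℚ ℝ).ne_zero ⟨0, h0⟩
        (Module.Basis.ofVectorSpace_apply_self ℚ ℝ ⟨0, h0⟩)
    · intro F hF z hsum x hx
      have li : LinearIndependent ℚ (fun i : Module.Basis.ofVectorSpaceIndex ℚ ℝ => (i : ℝ)) := by
        have := (Module.Basis.ofVectorSpace ℚ ℝ).linearIndependent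
        have heq : (fun i : Module.Basis.ofVectorSpaceIndex ℚ ℝ => (i : ℝ)) =
            fun i => Module.Basis.ofVectorSpace ℚ ℝ i := by
          funext i; exact (Module.Basis.ofVectorSpace_apply_self ℚ ℝ i).symm
        rw [heq]; exact this
      set s : Finset (Module.Basis.ofVectorSpaceIndex ℚ ℝ) :=
        F.attach.image (fun t => (⟨t.1, hF t.2⟩ : Module.Basis.ofVectorSpaceIndex ℚ ℝ)) with hs
      have hinj : ∀ t ∈ F.attach, ∀ u ∈ F.attach,
          (⟨t.1, hF t.2⟩ : Module.Basis.ofVectorSpaceIndex ℚ ℝ) = ⟨u.1, hF u.2⟩ → t = u := by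
        intro t _ u _ h
        have hval : (t : ℝ) = u := by simpa using h
        exact Subtype.ext hval
      have hsum' : (∑ i ∈ s, (z (i : ℝ) : ℚ) • (i : ℝ)) = 0 := by
        have h1 : (∑ i ∈ s, (z (i : ℝ) : ℚ) • (i : ℝ)) = ∑ t ∈ F, (z t : ℚ) • t := by
          rw [hs]
          exact (Finset.sum_image hinj).trans (Finset.sum_attach F fun r => (z r : ℚ) • r)
        rw [h1, show (∑ t ∈ F, (z t : ℚ) • t) = ∑ t ∈ F, z t • t from
          Finset.sum_congr rfl fun t _ => Int.cast_smul_eq_zsmul ℚ (z t) t]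
        exact hsum
      have hzero := linearIndependent_iff'.1 li s (fun i => (z (i : ℝ) : ℚ)) hsum'
        ⟨x, hF hx⟩ (Finset.mem_image.2 ⟨⟨x, hx⟩, Finset.mem_attach _ _, rfl⟩)
      have hz0 : (z x : ℚ) = 0 := hzero
      have : z x = 0 := by exact_mod_cast hz0
      rw [this, zero_zsmul]
    · rw [(Module.Basis.ofVectorSpace ℚ ℝ).mk_eq_rank'', Real.rank_rat_real]
end

section
/- If {H_a : a ∈ A} is a family of Hausdorff abelian topological groups, H = ⊕_{a∈A} H_a is their direct sum with the subspace topology from the product, and x_a ∈ H_a for each a, then the set X = {x_a : a ∈ A} is absolutely Cauchy summable in H. -/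
open Filter Topology

theorem stmt3 {A : Type*} [DecidableEq A] {H : A → Type*} [∀ a, AddCommGroup (H a)]
    [∀ a, TopologicalSpace (H a)] [∀ a, IsTopologicalAddGroup (H a)] [∀ a, T2Space (H a)]
    (x : Π a, H a) :
    AbsCauchySummable (Set.range fun a : A => sing (H := H) a (x a)) := by
  classical
  intro U hU
  rw [nhds_subtype_eq_comap, Filter.mem_comap] at hU
  obtain ⟨V, hV, hVU⟩ := hU
  have hV' : V ∈ 𝓝 (0 : Π a, H a) := hV
  rw [nhds_pi, Filter.mem_pi] at hV'
  obtain ⟨I, hIfin, t, ht, htV⟩ := hV'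
  refine ⟨hIfin.toFinset.image (fun a => sing (H := H) a (x a)), ?_, ?_⟩
  · intro y hy
    simp only [Finset.coe_image, Set.mem_image] at hy
    obtain ⟨b, _, rfl⟩ := hy
    exact ⟨b, rfl⟩
  · intro g hg
    apply hVU
    refine htV fun a ha => ?_
    have h0 : (g : Π a, H a) a = 0 := by
      have hle : AddSubgroup.closure
          (Set.range (fun a : A => sing (H := H) a (x a)) \
            ↑(hIfin.toFinset.image (fun a => sing (H := H) a (x a)))) ≤
          ((⊥ : AddSubgroup (H a)).comap
            ((Pi.evalAddMonoidHom H a).comp (FinSupp A H).subtype)) := by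
        rw [AddSubgroup.closure_le]
        rintro y ⟨⟨b, rfl⟩, hyF⟩
        have hbI : b ∉ I := fun hbI => hyF (by
          simp only [Finset.coe_image, Set.mem_image, Finset.mem_coe,
            Set.Finite.mem_toFinset]
          exact ⟨b, hbI, rfl⟩)
        have hab : a ≠ b := fun h => hbI (h ▸ ha)
        simp only [AddSubgroup.mem_comap, AddMonoidHom.coe_comp, Function.comp_apply,
          AddSubgroup.coe_subtype, Pi.evalAddMonoidHom_apply, AddSubgroup.mem_bot]
        exact Pi.single_eq_of_ne hab (x b)
      have := hle hg
      simpa [AddSubgroup.mem_comap] using this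
    rw [h0]
    exact mem_of_mem_nhds (ht a)
end

section
/- If {H_a : a ∈ A} is a family of Hausdorff abelian topological groups and x_a ∈ H_a \ {0} for every a ∈ A, then {x_a : a ∈ A} is topologically independent in the direct sum ⊕_{a∈A} H_a. -/
open Filter Topology

theorem stmt4 {A : Type*} [DecidableEq A] {H : A → Type*} [∀ a, AddCommGroup (H a)]
    [∀ a, TopologicalSpace (H a)] [∀ a, IsTopologicalAddGroup (H a)] [∀ a, T2Space (H a)]
    (x : Π a, H a) (hx : ∀ a, x a ≠ 0) :
    TopIndep (Set.range fun a : A => sing (H := H) a (x a)) := by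
  classical
  constructor
  · rintro ⟨a, ha⟩
    apply hx a
    have h := congrFun (congrArg Subtype.val ha) a
    simpa [sing] using h
  · intro W hW
    rw [mem_nhds_subtype] at hW
    obtain ⟨W', hW', hWsub⟩ := hW
    rw [show ((0 : FinSupp A H) : Π a, H a) = 0 from rfl, nhds_pi, Filter.mem_pi] at hW'
    obtain ⟨I, hI, t, ht, htW⟩ := hW'
    refine ⟨Subtype.val ⁻¹' Set.pi I t, ?_, ?_⟩
    · rw [mem_nhds_subtype]
      exact ⟨Set.pi I t, set_pi_mem_nhds hI (fun i _ => by simpa using ht i), subset_rfl⟩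
    · intro F hF z hsum y hy
      obtain ⟨b, hb⟩ := hF hy
      subst hb
      apply hWsub
      refine htW ?_
      intro a haI
      simp only [Set.mem_preimage] at hsum
      have hcoordval : ∀ (w : FinSupp A H), ((z w • w : FinSupp A H) : Π a, H a) a
          = z w • ((w : Π a, H a) a) := fun w => rfl
      by_cases hab : a = b
      · subst hab
        have hsa := hsum a haI
        have hcoord : ((((∑ w ∈ F, z w • w : FinSupp A H)) : Π a, H a)) a
            = ((z (sing a (x a)) • (sing a (x a)) : FinSupp A H) : Π a', H a') a := by
          rw [show (((∑ w ∈ F, z w • w : FinSupp A H)) : Π a, H a)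
              = ∑ w ∈ F, ((z w • w : FinSupp A H) : Π a, H a) from
            map_sum (AddSubgroup.subtype _) _ _]
          rw [Finset.sum_apply]
          refine Finset.sum_eq_single _ (fun y' hy' hne => ?_) (fun h => absurd hy h)
          obtain ⟨c, hc⟩ := hF hy'
          subst hc
          have hca : c ≠ a := fun h => hne (by rw [h])
          rw [hcoordval]
          show z (sing c (x c)) • (Pi.single c (x c)) a = 0
          rw [Pi.single_eq_of_ne (Ne.symm hca)]
          simp
        rw [← hcoord]
        exact hsa
      · rw [hcoordval]
        show z (sing b (x b)) • (Pi.single b (x b)) a ∈ t a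
        rw [Pi.single_eq_of_ne hab]
        simpa using mem_of_mem_nhds (ht a)
end

section
/- For a subset A of a Hausdorff abelian topological group G with 0 ∉ A, the Kalton map κ_A : ⊕_{a∈A}⟨a⟩ → G is continuous if and only if A is absolutely Cauchy summable in G. -/
open Filter Topology

section KaltonAux
variable {G : Type*} [AddCommGroup G] (A : Set G)

lemma kalton_support_finite (f : FinSupp A (fun a => AddSubgroup.zmultiples (a : G))) :
    (Function.support fun a : A => ((f.1 a : G))).Finite :=
  f.2.subset fun a ha => by
    simp only [Function.mem_support] at ha
    intro h
    exact ha (by simp [h])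

lemma kalton_zero : kalton A (0 : FinSupp A (fun a => AddSubgroup.zmultiples (a : G))) = 0 := by
  simp [kalton]

lemma kalton_add (f g : FinSupp A (fun a => AddSubgroup.zmultiples (a : G))) :
    kalton A (f + g) = kalton A f + kalton A g := by
  unfold kalton
  rw [← finsum_add_distrib (kalton_support_finite A f) (kalton_support_finite A g)]
  rfl

noncomputable def kaltonHom :
    FinSupp A (fun a => AddSubgroup.zmultiples (a : G)) →+ G where
  toFun := kalton A
  map_zero' := kalton_zero A
  map_add' := kalton_add A

lemma kalton_sing [DecidableEq A] (i : A) (x : AddSubgroup.zmultiples (i : G)) :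
    kalton A (sing i x) = x := by
  unfold kalton
  rw [finsum_eq_single _ i]
  · simp [sing]
  · intro j hj
    simp [sing, Pi.single_eq_of_ne hj]

end KaltonAux

theorem stmt5 {G : Type*} [AddCommGroup G] [TopologicalSpace G] [IsTopologicalAddGroup G]
    [T2Space G] (A : Set G) (h0 : (0 : G) ∉ A) :
    Continuous (kalton A) ↔ AbsCauchySummable A := by
  classical
  constructor
  · intro hc U hU
    have h0' : ContinuousAt (kalton A) 0 := hc.continuousAt
    have hpre : kalton A ⁻¹' U ∈ 𝓝 (0 : FinSupp A (fun a => AddSubgroup.zmultiples (a : G))) := by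
      have hU' : U ∈ 𝓝 (kalton A (0 : FinSupp A (fun a => AddSubgroup.zmultiples (a : G)))) := by
        rw [kalton_zero]; exact hU
      exact h0' hU'
    rw [mem_nhds_subtype] at hpre
    obtain ⟨s, hs, hsub⟩ := hpre
    have hs0 : s ∈ 𝓝 (0 : Π a : A, AddSubgroup.zmultiples (a : G)) := by
      simpa using hs
    rw [nhds_pi] at hs0
    obtain ⟨I, hIfin, t, ht, hpi⟩ := Filter.mem_pi.mp hs0
    refine ⟨hIfin.toFinset.image Subtype.val, ?_, ?_⟩
    · intro x hx
      simp only [Finset.coe_image, Set.mem_image] at hx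
      obtain ⟨a, _, rfl⟩ := hx
      exact a.2
    · set F : Finset G := hIfin.toFinset.image Subtype.val with hF
      set Q : AddSubgroup (FinSupp A (fun a => AddSubgroup.zmultiples (a : G))) :=
        { carrier := {f | ∀ a ∈ I, f.1 a = 0}
          zero_mem' := fun a _ => rfl
          add_mem' := by
            intro f g hf hg a ha
            have : (↑(f + g) : Π a : A, AddSubgroup.zmultiples (a : G)) a = f.1 a + g.1 a := rfl
            rw [this, hf a ha, hg a ha, add_zero]
          neg_mem' := by
            intro f hf a ha
            have : (↑(-f) : Π a : A, AddSubgroup.zmultiples (a : G)) a = -(f.1 a) := rfl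
            rw [this, hf a ha, neg_zero] } with hQ
      have hle : AddSubgroup.closure (A \ ↑F) ≤ Q.map (kaltonHom A) := by
        rw [AddSubgroup.closure_le]
        intro x hx
        have hxA : x ∈ A := hx.1
        have hxF : x ∉ (F : Set G) := hx.2
        refine ⟨sing (⟨x, hxA⟩ : A) ⟨x, AddSubgroup.mem_zmultiples x⟩, ?_, ?_⟩
        · intro a ha
          have hne : a ≠ (⟨x, hxA⟩ : A) := by
            rintro rfl
            exact hxF (Finset.mem_coe.mpr (Finset.mem_image.mpr
              ⟨⟨x, hxA⟩, hIfin.mem_toFinset.mpr ha, rfl⟩))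
          exact congrFun (congrArg Subtype.val rfl) a ▸ Pi.single_eq_of_ne hne _
        · exact kalton_sing A _ _
      intro g hg
      obtain ⟨f, hfQ, hfg⟩ := hle hg
      have hfs : (f : Π a : A, AddSubgroup.zmultiples (a : G)) ∈ s := by
        apply hpi
        intro a ha
        have : f.1 a = 0 := hfQ a ha
        rw [this]
        exact mem_of_mem_nhds (ht a)
      have := hsub hfs
      rw [← hfg]
      exact this
  · intro hs
    have hc0 : ContinuousAt (kalton A) 0 := by
      have hk0 : kalton A (0 : FinSupp A (fun a => AddSubgroup.zmultiples (a : G))) = 0 :=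
        kalton_zero A
      rw [ContinuousAt, hk0]
      rw [Filter.tendsto_def]
      intro W hW
      obtain ⟨W₁, hW₁, hW₁W⟩ := exists_nhds_zero_half hW
      obtain ⟨F, hFA, hFcl⟩ := hs W₁ hW₁
      have hIfin : (Subtype.val ⁻¹' (F : Set G) : Set A).Finite :=
        F.finite_toSet.preimage (Subtype.val_injective.injOn)
      set J : Finset A := hIfin.toFinset with hJ
      set h : FinSupp A (fun a => AddSubgroup.zmultiples (a : G)) → G :=
        fun f => ∑ a ∈ J, ((f.1 a : G)) with hh
      have hcont : Continuous h := by
        apply continuous_finset_sum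
        intro a _
        exact continuous_subtype_val.comp ((continuous_apply a).comp continuous_subtype_val)
      have hh0 : h 0 = 0 := by simp [hh]
      have hV : h ⁻¹' W₁ ∈ 𝓝 (0 : FinSupp A (fun a => AddSubgroup.zmultiples (a : G))) := by
        have := hcont.continuousAt (x := 0)
        rw [ContinuousAt, hh0] at this
        exact this hW₁
      refine Filter.mem_of_superset hV ?_
      intro f hf
      set T : Finset A := f.2.toFinset ∪ J with hT
      have hJT : J ⊆ T := Finset.subset_union_right
      have hkf : kalton A f = ∑ a ∈ T, ((f.1 a : G)) := by
        apply finsum_eq_finset_sum_of_support_subset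
        intro a ha
        have : f.1 a ≠ 0 := by
          intro hz
          apply ha
          simp [hz]
        simp [hT, Set.Finite.mem_toFinset]
        left
        exact (Set.Finite.mem_toFinset _).mpr this
      have hsplit : (∑ a ∈ T \ J, ((f.1 a : G))) + ∑ a ∈ J, ((f.1 a : G)) =
          ∑ a ∈ T, ((f.1 a : G)) := Finset.sum_sdiff hJT
      have htail : (∑ a ∈ T \ J, ((f.1 a : G))) ∈ W₁ := by
        apply hFcl
        refine AddSubgroup.sum_mem _ ?_
        intro a ha
        have haJ : a ∉ J := (Finset.mem_sdiff.mp ha).2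
        have haF : (a : G) ∉ (F : Set G) := by
          intro hmem
          exact haJ (by simp [hJ, Set.Finite.mem_toFinset, hmem])
        obtain ⟨n, hn⟩ := AddSubgroup.mem_zmultiples_iff.mp (f.1 a).2
        have : ((f.1 a : G)) = n • (a : G) := hn.symm
        rw [this]
        exact AddSubgroup.zsmul_mem _ (AddSubgroup.subset_closure (show (a : G) ∈ A \ ↑F from ⟨a.2, haF⟩)) n
      have : kalton A f ∈ W := by
        rw [hkf, ← hsplit]
        exact hW₁W _ htail _ hf
      exact this
    exact continuous_of_continuousAt_zero (kaltonHom A) hc0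
end

section
/- Every topologically independent subset of a Hausdorff topological vector space is linearly independent over ℝ. -/
open Filter Topology

lemma tsum_small {E : Type*} [AddCommGroup E] [Module ℝ E] [TopologicalSpace E]
    [IsTopologicalAddGroup E] [ContinuousSMul ℝ E]
    (F : Finset E) {U : Set E} (hU : U ∈ 𝓝 (0 : E)) :
    ∃ ε > 0, ∀ t : E → ℝ, (∀ a ∈ F, |t a| ≤ ε) → (∑ a ∈ F, t a • a) ∈ U := by
  classical
  induction F using Finset.induction_on generalizing U with
  | empty => exact ⟨1, one_pos, fun t _ => by simpa using mem_of_mem_nhds hU⟩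
  | @insert a F ha ih =>
    obtain ⟨V, hV, -, -, hVU⟩ := exists_closed_nhds_zero_neg_eq_add_subset hU
    obtain ⟨ε₂, hε₂, h₂⟩ := ih hV
    have hcont : Filter.Tendsto (fun r : ℝ => r • a) (𝓝 0) (𝓝 (0 : E)) := by
      have := (continuous_id.smul (continuous_const : Continuous fun _ : ℝ => a)).tendsto 0
      have h' : Filter.Tendsto (fun r : ℝ => r • a) (𝓝 0) (𝓝 ((0:ℝ) • a)) := this
      simpa using h'
    obtain ⟨ε₁, hε₁, h₁⟩ := Metric.eventually_nhds_iff_ball.mp (hcont.eventually_mem hV)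
    refine ⟨min (ε₁ / 2) ε₂, lt_min (by linarith) hε₂, fun t ht => ?_⟩
    rw [Finset.sum_insert ha]
    apply hVU
    refine Set.add_mem_add ?_ ?_
    · apply h₁
      have := ht a (Finset.mem_insert_self a F)
      rw [Metric.mem_ball, Real.dist_eq, sub_zero]
      exact lt_of_le_of_lt this (lt_of_le_of_lt (min_le_left _ _) (by linarith))
    · exact h₂ t fun b hb => le_trans (ht b (Finset.mem_insert_of_mem hb)) (min_le_right _ _)

lemma line_lemma {E : Type*} [AddCommGroup E] [Module ℝ E] [TopologicalSpace E]
    [IsTopologicalAddGroup E] [ContinuousSMul ℝ E] [T2Space E]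
    {a : E} (ha : a ≠ 0) :
    ∃ W ∈ 𝓝 (0 : E), ∀ t : ℝ, t • a ∈ W → |t| < 1 := by
  have h := (isClosedEmbedding_smul_left (𝕜 := ℝ) ha).toIsEmbedding.toIsInducing
  have h2 : 𝓝 (0 : ℝ) = Filter.comap (fun t : ℝ => t • a) (𝓝 (0 : E)) := by
    simpa using h.nhds_eq_comap 0
  have hIoo : Set.Ioo (-1 : ℝ) 1 ∈ 𝓝 (0 : ℝ) := Ioo_mem_nhds (by norm_num) (by norm_num)
  rw [h2, Filter.mem_comap] at hIoo
  obtain ⟨W, hW, hWsub⟩ := hIoo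
  refine ⟨W, hW, fun t ht => abs_lt.2 ?_⟩
  have := hWsub ht
  exact ⟨this.1, this.2⟩

lemma approx_lemma {E : Type*} (F : Finset E) (c : E → ℝ) {δ : ℝ} (hδ : 0 < δ) :
    ∃ n : ℕ, 1 ≤ n ∧ ∃ z : E → ℤ, ∀ a ∈ F, |(n : ℝ) * c a - z a| < δ := by
  classical
  set m : ℕ := ⌈1 / δ⌉₊ with hm
  have hm1 : 1 ≤ m := Nat.one_le_iff_ne_zero.2 (by
    simp only [hm, ne_eq, Nat.ceil_eq_zero, not_le]
    positivity)
  have hmδ : 1 / (m : ℝ) ≤ δ := by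
    rw [div_le_iff₀ (by exact_mod_cast hm1)]
    calc (1:ℝ) = δ * (1/δ) := by field_simp
    _ ≤ δ * m := by
      have := Nat.le_ceil (1/δ)
      nlinarith [Nat.le_ceil (1/δ)]
  have hbox : ∀ (k : ℕ) (a : E), (⌊Int.fract ((k : ℝ) * c a) * m⌋).toNat < m := by
    intro k a
    have h0 : (0:ℝ) ≤ Int.fract ((k : ℝ) * c a) := Int.fract_nonneg _
    have h1 : Int.fract ((k : ℝ) * c a) < 1 := Int.fract_lt_one _
    have : ⌊Int.fract ((k : ℝ) * c a) * m⌋ < (m : ℤ) := by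
      rw [Int.floor_lt]
      push_cast
      nlinarith [show (0:ℝ) < m by exact_mod_cast hm1]
    rw [Int.toNat_lt' (by omega)]
    exact this
  let φ : ℕ → ({a // a ∈ F} → Fin m) := fun k a => ⟨_, hbox k a.1⟩
  obtain ⟨k, hk, l, hl, hkl, hφ⟩ :=
    Finset.exists_ne_map_eq_of_card_lt_of_maps_to
      (s := Finset.range (Fintype.card ({a // a ∈ F} → Fin m) + 1)) (t := Finset.univ)
      (by simp) (fun k _ => Finset.mem_univ (φ k))
  wlog hlt : k < l generalizing k l
  · exact this l hl k hk hkl.symm hφ.symm (by omega)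
  refine ⟨l - k, by omega, fun x => ⌊(l : ℝ) * c x⌋ - ⌊(k : ℝ) * c x⌋, fun a haF => ?_⟩
  have hfl : ⌊Int.fract ((l : ℝ) * c a) * m⌋ = ⌊Int.fract ((k : ℝ) * c a) * m⌋ := by
    have := congrFun hφ ⟨a, haF⟩
    simp only [φ, Fin.mk.injEq] at this
    have h0l : 0 ≤ ⌊Int.fract ((l : ℝ) * c a) * m⌋ :=
      Int.floor_nonneg.2 (mul_nonneg (Int.fract_nonneg _) (by positivity))
    have h0k : 0 ≤ ⌊Int.fract ((k : ℝ) * c a) * m⌋ :=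
      Int.floor_nonneg.2 (mul_nonneg (Int.fract_nonneg _) (by positivity))
    omega
  have habs := Int.abs_sub_lt_one_of_floor_eq_floor hfl
  have hfrac : |Int.fract ((l : ℝ) * c a) - Int.fract ((k : ℝ) * c a)| < 1 / m := by
    rw [lt_div_iff₀ (by exact_mod_cast hm1)]
    calc |Int.fract ((l : ℝ) * c a) - Int.fract ((k : ℝ) * c a)| * m
        = |Int.fract ((l : ℝ) * c a) * m - Int.fract ((k : ℝ) * c a) * m| := by
          rw [← sub_mul, abs_mul, abs_of_nonneg (by positivity : (0:ℝ) ≤ (m:ℝ))]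
    _ < 1 := habs
  have hcast : ((l - k : ℕ) : ℝ) = (l : ℝ) - (k : ℝ) := by
    push_cast [Nat.cast_sub hlt.le]; ring
  have key : ((l - k : ℕ) : ℝ) * c a - ((⌊(l : ℝ) * c a⌋ - ⌊(k : ℝ) * c a⌋ : ℤ) : ℝ)
      = Int.fract ((l : ℝ) * c a) - Int.fract ((k : ℝ) * c a) := by
    rw [hcast]
    unfold Int.fract
    push_cast
    ring
  rw [key]
  exact lt_of_lt_of_le hfrac hmδ

theorem stmt9 {E : Type*} [AddCommGroup E] [Module ℝ E] [TopologicalSpace E]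
    [IsTopologicalAddGroup E] [ContinuousSMul ℝ E] [T2Space E]
    (A : Set E) (hA : TopIndep A) :
    LinearIndependent ℝ ((↑) : A → E) := by
  classical
  rw [linearIndependent_iff']
  intro s g hg i hi
  by_contra hgi
  -- set up an E-indexed picture
  set c : E → ℝ := fun x => if h : x ∈ A then g ⟨x, h⟩ else 0 with hc
  set F : Finset E := s.image Subtype.val with hF
  have hcoe : ∀ j : A, j ∈ s → c (j : E) = g j := fun j _ => by
    simp only [hc, dif_pos j.2]
  have hFA : (↑F : Set E) ⊆ A := by
    intro x hx
    simp only [hF, Finset.coe_image, Set.mem_image] at hx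
    obtain ⟨j, _, rfl⟩ := hx
    exact j.2
  have hsum : ∑ a ∈ F, c a • a = 0 := by
    rw [hF, Finset.sum_image (fun x _ y _ h => Subtype.val_injective h)]
    rw [← hg]
    exact Finset.sum_congr rfl fun j hj => by rw [hcoe j hj]
  set a₀ : E := (i : E) with ha₀
  have ha₀F : a₀ ∈ F := Finset.mem_image_of_mem _ hi
  have hc₀ : c a₀ ≠ 0 := by rw [ha₀, hcoe i hi]; exact hgi
  have ha₀0 : a₀ ≠ 0 := fun h => hA.1 (h ▸ i.2)
  -- the main contradiction
  obtain ⟨W, hW, hWlt⟩ := line_lemma ha₀0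
  obtain ⟨U, hU, hUW⟩ := hA.2 W hW
  obtain ⟨ε, hε, hεU⟩ := tsum_small F hU
  set ε' : ℝ := min ε (1/2) with hε'
  have hε'pos : 0 < ε' := lt_min hε (by norm_num)
  set M : ℕ := ⌈2 / |c a₀|⌉₊ + 1 with hM
  have hMpos : (0:ℝ) < M := by positivity
  have hMc : 2 ≤ (M : ℝ) * |c a₀| := by
    have h1 : 2 / |c a₀| ≤ (M : ℝ) := le_trans (Nat.le_ceil _) (by rw [hM]; push_cast; linarith)
    have h2 : 0 < |c a₀| := abs_pos.2 hc₀
    calc (2:ℝ) = (2 / |c a₀|) * |c a₀| := by field_simp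
    _ ≤ (M : ℝ) * |c a₀| := by nlinarith
  obtain ⟨n, hn1, z', hz'⟩ := approx_lemma F c (show (0:ℝ) < ε' / M by positivity)
  set N : ℕ := M * n with hN
  set z : E → ℤ := fun x => (M : ℤ) * z' x with hz
  have hNz : ∀ a ∈ F, |(N : ℝ) * c a - z a| < ε' := by
    intro a haF
    have := hz' a haF
    have : |(M:ℝ)| * |(n : ℝ) * c a - z' a| < |(M:ℝ)| * (ε' / M) := by
      rw [abs_of_pos hMpos]
      exact mul_lt_mul_of_pos_left this hMpos
    calc |(N : ℝ) * c a - z a| = |(M:ℝ) * ((n : ℝ) * c a - z' a)| := by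
          congr 1; push_cast [hN, hz]; ring
    _ = |(M:ℝ)| * |(n : ℝ) * c a - z' a| := abs_mul _ _
    _ < |(M:ℝ)| * (ε' / M) := this
    _ = ε' := by rw [abs_of_pos hMpos]; field_simp
  -- the integer combination lies in U
  set t : E → ℝ := fun x => (N : ℝ) * c x - z x with ht
  have hsumz : (∑ a ∈ F, z a • a) = ∑ a ∈ F, (-(t a)) • a := by
    have e1 : ∀ a ∈ F, z a • a = ((z a : ℝ)) • a := fun a _ =>
      (Int.cast_smul_eq_zsmul ℝ (z a) a).symm
    rw [Finset.sum_congr rfl e1]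
    have e2 : ∀ a ∈ F, ((z a : ℝ)) • a = ((N:ℝ) * c a) • a + (-(t a)) • a := by
      intro a _
      rw [← add_smul]
      congr 1
      simp only [ht]; ring
    rw [Finset.sum_congr rfl e2, Finset.sum_add_distrib]
    have e3 : ∑ a ∈ F, ((N:ℝ) * c a) • a = 0 := by
      have : ∀ a ∈ F, ((N:ℝ) * c a) • a = (N:ℝ) • (c a • a) := fun a _ => mul_smul _ _ _
      rw [Finset.sum_congr rfl this, ← Finset.smul_sum, hsum, smul_zero]
    rw [e3, zero_add]
  have hmemU : (∑ a ∈ F, z a • a) ∈ U := by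
    rw [hsumz]
    apply hεU
    intro a haF
    rw [abs_neg]
    exact le_trans (hNz a haF).le (min_le_left _ _)
  have hzW := hUW F hFA z hmemU a₀ ha₀F
  have hzW' : ((z a₀ : ℝ)) • a₀ ∈ W := by rwa [Int.cast_smul_eq_zsmul]
  have hlt := hWlt _ hzW'
  -- but |z a₀| ≥ 3/2
  have hNc : 2 ≤ |(N : ℝ) * c a₀| := by
    rw [abs_mul]
    have hn' : (M:ℝ) ≤ (N:ℝ) := by
      rw [hN]; push_cast
      nlinarith [show (1:ℝ) ≤ (n:ℝ) by exact_mod_cast hn1, hMpos]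
    have : (0:ℝ) ≤ (N:ℝ) := by positivity
    rw [abs_of_nonneg this]
    nlinarith [abs_pos.2 hc₀]
  have h1 := hNz a₀ ha₀F
  have hε'half : ε' ≤ 1/2 := min_le_right _ _
  have : (1:ℝ) ≤ |(z a₀ : ℝ)| := by
    have := abs_sub_abs_le_abs_sub ((N : ℝ) * c a₀) ((z a₀ : ℝ))
    linarith
  linarith
end

section
/- A subset A of a Hausdorff abelian topological group G is both topologically independent and absolutely Cauchy summable in G if and only if the Kalton map κ_A : S_A → G is a topologically isomorphic embedding. -/
open Filter Topology

namespace Stmt11Aux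

variable {G : Type*} [AddCommGroup G] {A : Set G}

abbrev SA (A : Set G) := ↥(FinSupp A (fun a => AddSubgroup.zmultiples (a : G)))

lemma supp_fin (f : SA A) : (Function.support fun a : A => ((f.1 a : G))).Finite :=
  f.2.subset fun a ha => by
    simp only [Function.mem_support] at ha
    exact fun h => ha (by simp [h])

lemma kalton_add (f g : SA A) : kalton A (f + g) = kalton A f + kalton A g := by
  have h : ∀ a : A, (((f + g).1 a : G)) = (f.1 a : G) + (g.1 a : G) := fun a => rfl
  calc kalton A (f + g) = ∑ᶠ a : A, ((f.1 a : G) + (g.1 a : G)) := finsum_congr h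
    _ = kalton A f + kalton A g := finsum_add_distrib (supp_fin f) (supp_fin g)

noncomputable def kaltonHom (A : Set G) : SA A →+ G := AddMonoidHom.mk' (kalton A) kalton_add

lemma kalton_eq_sum (f : SA A) {T : Finset A} (hT : ∀ a : A, f.1 a ≠ 0 → a ∈ T) :
    kalton A f = ∑ a ∈ T, ((f.1 a : G)) :=
  finsum_eq_sum_of_support_subset _ (fun a ha => by
    simp only [Function.mem_support] at ha
    exact hT a fun h => ha (by simp [h]))

lemma exists_repr (f : SA A) : ∃ (F : Finset G) (z : G → ℤ), ↑F ⊆ A ∧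
    kalton A f = ∑ g ∈ F, z g • g ∧ (∀ a : A, z a • (a : G) = f.1 a) ∧
    (∀ a : A, (a : G) ∉ F → f.1 a = 0) := by
  classical
  set T : Finset A := f.2.toFinset with hTdef
  have hmemT : ∀ a : A, a ∈ T ↔ f.1 a ≠ 0 := fun a => f.2.mem_toFinset
  refine ⟨T.image Subtype.val,
    fun g => if h : g ∈ A then (AddSubgroup.mem_zmultiples_iff.mp (f.1 ⟨g, h⟩).2).choose else 0,
    ?_, ?_, ?_, ?_⟩
  · rintro g hg
    simp only [Finset.coe_image, Set.mem_image, Finset.mem_coe] at hg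
    obtain ⟨a, -, rfl⟩ := hg
    exact a.2
  · rw [kalton_eq_sum f (T := T) (fun a ha => (hmemT a).mpr ha),
      Finset.sum_image (fun a _ b _ h => Subtype.val_injective h)]
    refine Finset.sum_congr rfl fun a _ => ?_
    beta_reduce
    rw [dif_pos a.2]
    have := (AddSubgroup.mem_zmultiples_iff.mp (f.1 ⟨(a : G), a.2⟩).2).choose_spec
    simpa using this.symm
  · intro a
    beta_reduce
    rw [dif_pos a.2]
    have := (AddSubgroup.mem_zmultiples_iff.mp (f.1 ⟨(a : G), a.2⟩).2).choose_spec
    simpa using this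
  · intro a ha
    by_contra h
    exact ha (Finset.mem_image.mpr ⟨a, (hmemT a).mpr h, rfl⟩)

open Classical in
noncomputable def comb (A : Set G) (F : Finset G) (z : G → ℤ) : SA A :=
  ⟨fun a => if (a : G) ∈ F then ⟨z a • a, AddSubgroup.zsmul_mem _ (AddSubgroup.mem_zmultiples _) _⟩
      else 0, by
    refine Set.Finite.subset (Set.Finite.preimage (Subtype.val_injective.injOn) F.finite_toSet)
      fun a ha => ?_
    simp only [Set.mem_setOf_eq] at ha
    by_contra h
    exact ha (if_neg h)⟩

lemma comb_apply_mem {F : Finset G} {z : G → ℤ} (a : A) (h : (a : G) ∈ F) :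
    (((comb A F z).1 a : G)) = z a • (a : G) := by
  simp only [comb, if_pos h]

lemma comb_apply_not_mem {F : Finset G} {z : G → ℤ} (a : A) (h : (a : G) ∉ F) :
    (comb A F z).1 a = 0 := by
  simp only [comb, if_neg h]

lemma kalton_comb {F : Finset G} (hFA : ↑F ⊆ A) (z : G → ℤ) :
    kalton A (comb A F z) = ∑ g ∈ F, z g • g := by
  classical
  rw [kalton_eq_sum (comb A F z) (T := F.preimage Subtype.val (Subtype.val_injective.injOn))
    (fun a ha => Finset.mem_preimage.mpr (by
      by_contra h
      exact ha (comb_apply_not_mem a h)))]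
  rw [show (∑ a ∈ F.preimage Subtype.val (Subtype.val_injective.injOn), (((comb A F z).1 a : G)))
      = ∑ a ∈ F.preimage Subtype.val (Subtype.val_injective.injOn), z (a : G) • (a : G) from
    Finset.sum_congr rfl fun a ha => comb_apply_mem a (Finset.mem_preimage.mp ha)]
  exact Finset.sum_preimage Subtype.val F _ (fun g => z g • g)
    (fun x hx hr => absurd ⟨⟨x, hFA hx⟩, rfl⟩ hr)

end Stmt11Aux

namespace Stmt11Aux
variable {G : Type*} [AddCommGroup G] [TopologicalSpace G] [IsTopologicalAddGroup G] {A : Set G}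

lemma coord_continuous (a : A) : Continuous fun f : SA A => ((f.1 a : G)) :=
  continuous_subtype_val.comp ((continuous_apply a).comp continuous_subtype_val)

lemma nhds_zero_basis (A : Set G) {t : Set (SA A)} (ht : t ∈ 𝓝 (0 : SA A)) :
    ∃ (I : Finset A) (W : A → Set G), (∀ a : A, W a ∈ 𝓝 (0 : G)) ∧
      {f : SA A | ∀ a ∈ I, ((f.1 a : G)) ∈ W a} ⊆ t := by
  classical
  rw [nhds_induced Subtype.val] at ht
  obtain ⟨s, hs, hst⟩ := mem_comap.mp ht
  have hs' : s ∈ Filter.pi fun a : A => 𝓝 ((0 : Π a : A, AddSubgroup.zmultiples (a : G)) a) := by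
    rwa [← nhds_pi]
  obtain ⟨I, hIfin, V, hV, hVs⟩ := Filter.mem_pi.mp hs'
  have hW : ∀ a : A, ∃ W ∈ 𝓝 (0 : G), (Subtype.val : AddSubgroup.zmultiples (a : G) → G) ⁻¹' W ⊆ V a := by
    intro a
    have h := hV a
    rw [nhds_induced Subtype.val] at h
    exact mem_comap.mp h
  choose W hWnhds hWV using hW
  refine ⟨hIfin.toFinset, W, hWnhds, fun f hf => hst ?_⟩
  refine Set.mem_preimage.mpr (hVs ?_)
  intro a haI
  exact hWV a (hf a (hIfin.mem_toFinset.mpr haI))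

lemma topIndep_nhds (hti : TopIndep A) {t : Set (SA A)} (ht : t ∈ 𝓝 (0 : SA A)) :
    ∃ U ∈ 𝓝 (0 : G), ∀ f : SA A, kalton A f ∈ U → f ∈ t := by
  obtain ⟨I, W, hW, hsub⟩ := nhds_zero_basis A ht
  have hWf : (⋂ a ∈ I, W a) ∈ 𝓝 (0 : G) := (Filter.biInter_finset_mem I).mpr fun a _ => hW a
  obtain ⟨U, hU, hUp⟩ := hti.2 _ hWf
  refine ⟨U, hU, fun f hf => hsub fun a haI => ?_⟩
  obtain ⟨F, z, hFA, hsum, hz, hz0⟩ := exists_repr f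
  by_cases hmem : (a : G) ∈ F
  · have h1 : z (a : G) • (a : G) ∈ ⋂ b ∈ I, W b := hUp F hFA z (by rwa [← hsum]) _ hmem
    rw [hz a] at h1
    exact Set.mem_iInter₂.mp h1 a haI
  · rw [hz0 a hmem]
    simpa using mem_of_mem_nhds (hW a)

lemma sum_nhds {ι : Type*} (T : Finset ι) :
    ∀ U ∈ 𝓝 (0 : G), ∃ V ∈ 𝓝 (0 : G), ∀ g : ι → G, (∀ i ∈ T, g i ∈ V) → ∑ i ∈ T, g i ∈ U := by
  classical
  induction T using Finset.induction_on with
  | empty => exact fun U hU => ⟨U, hU, fun g _ => by simpa using mem_of_mem_nhds hU⟩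
  | @insert i T hiT ih =>
    intro U hU
    obtain ⟨V₂, hV₂, hsplit⟩ := exists_nhds_zero_half hU
    obtain ⟨V, hV, hVsum⟩ := ih V₂ hV₂
    refine ⟨V ∩ V₂, inter_mem hV hV₂, fun g hg => ?_⟩
    rw [Finset.sum_insert hiT]
    exact hsplit _ (hg i (Finset.mem_insert_self i T)).2 _
      (hVsum g fun j hj => (hg j (Finset.mem_insert_of_mem hj)).1)

lemma continuous_kalton (hacs : AbsCauchySummable A) : Continuous (kalton A) := by
  classical
  have hca : ContinuousAt (kaltonHom A) 0 := by
    rw [ContinuousAt, map_zero]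
    rw [Filter.tendsto_def]
    intro U hU
    obtain ⟨U₂, hU₂, hsplit⟩ := exists_nhds_zero_half hU
    obtain ⟨F, hFA, hFc⟩ := hacs U₂ hU₂
    set T : Finset A := F.preimage Subtype.val (Subtype.val_injective.injOn) with hTdef
    obtain ⟨V, hV, hVsum⟩ := sum_nhds (G := G) T U₂ hU₂
    have hN : (⋂ a ∈ T, {f : SA A | ((f.1 a : G)) ∈ V}) ∈ 𝓝 (0 : SA A) := by
      refine (Filter.biInter_finset_mem T).mpr fun a _ => ?_
      exact (coord_continuous a).continuousAt.preimage_mem_nhds hV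
    refine mem_of_superset hN fun f hf => ?_
    have hf' : ∀ a ∈ T, ((f.1 a : G)) ∈ V := fun a ha => Set.mem_iInter₂.mp hf a ha
    set Ts : Finset A := f.2.toFinset with hTs
    have h1 : kalton A f = ∑ a ∈ Ts ∪ T, ((f.1 a : G)) := by
      rw [kalton_eq_sum f (T := Ts) fun a ha => f.2.mem_toFinset.mpr ha]
      refine Finset.sum_subset Finset.subset_union_left fun a _ ha => ?_
      have : f.1 a = 0 := by
        by_contra h
        exact ha (f.2.mem_toFinset.mpr h)
      simp [this]
    have h2 : ∑ a ∈ Ts ∪ T, ((f.1 a : G))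
        = (∑ a ∈ (Ts ∪ T) \ T, ((f.1 a : G))) + ∑ a ∈ T, ((f.1 a : G)) :=
      (Finset.sum_sdiff Finset.subset_union_right).symm
    have hrest : (∑ a ∈ (Ts ∪ T) \ T, ((f.1 a : G))) ∈ U₂ := by
      refine hFc ?_
      refine AddSubgroup.sum_mem _ fun a ha => ?_
      have haT : a ∉ T := (Finset.mem_sdiff.mp ha).2
      have haF : (a : G) ∉ F := fun h => haT (Finset.mem_preimage.mpr h)
      have : (a : G) ∈ A \ ↑F := ⟨a.2, haF⟩
      have hle : AddSubgroup.zmultiples (a : G) ≤ AddSubgroup.closure (A \ ↑F) := by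
        rw [AddSubgroup.zmultiples_le]
        · exact AddSubgroup.subset_closure this
      exact hle (f.1 a).2
    have hmain : kalton A f ∈ U := by
      rw [h1, h2]
      exact hsplit _ hrest _ (hVsum _ hf')
    exact Set.mem_preimage.mpr hmain
  exact continuous_of_continuousAt_zero (kaltonHom A) hca


set_option synthInstance.maxHeartbeats 1000000 in
instance : IsTopologicalAddGroup (SA A) := inferInstance

set_option synthInstance.maxHeartbeats 1000000 in
instance : ContinuousAdd (SA A) := inferInstance

lemma indep_of_topIndep [T1Space G] (hti : TopIndep A) : Indep A := by
  refine ⟨hti.1, fun F hFA z hsum a haF => ?_⟩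
  have hall : ∀ W ∈ 𝓝 (0 : G), z a • a ∈ W := fun W hW => by
    obtain ⟨U, hU, hUp⟩ := hti.2 W hW
    exact hUp F hFA z (by rw [hsum]; exact mem_of_mem_nhds hU) a haF
  by_contra hne
  exact hall _ (compl_singleton_mem_nhds fun h => hne h.symm) rfl

lemma injective_kalton [T1Space G] (hti : TopIndep A) : Function.Injective (kalton A) := by
  have hind := indep_of_topIndep hti
  refine (injective_iff_map_eq_zero (kaltonHom A)).mpr fun f hf => ?_
  obtain ⟨F, z, hFA, hsum, hz, hz0⟩ := exists_repr f
  have hzz := hind.2 F hFA z (by rw [← hsum]; exact hf)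
  refine Subtype.ext (funext fun a => ?_)
  by_cases h : (a : G) ∈ F
  · refine Subtype.ext ?_
    have := hzz (a : G) h
    rw [hz a] at this
    simpa using this
  · simpa using hz0 a h

lemma open_kalton (hti : TopIndep A) (O : Set (SA A)) (hO : IsOpen O) :
    ∃ V : Set G, IsOpen V ∧ kalton A '' O = V ∩ Set.range (kalton A) := by
  classical
  have key : ∀ x : SA A, ∃ U, U ∈ 𝓝 (0 : G) ∧
      (x ∈ O → ∀ g : SA A, kalton A g - kalton A x ∈ U → g ∈ O) := by
    intro x
    by_cases hx : x ∈ O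
    · have hO' : ((· + x) ⁻¹' O) ∈ 𝓝 (0 : SA A) := by
        refine ContinuousAt.preimage_mem_nhds
          ((continuous_id.add continuous_const).continuousAt) ?_
        simpa only [zero_add] using hO.mem_nhds hx
      obtain ⟨U, hU, hUp⟩ := topIndep_nhds hti hO'
      refine ⟨U, hU, fun _ g hg => ?_⟩
      have h1 : kalton A (g - x) ∈ U := by
        rw [show kalton A (g - x) = kalton A g - kalton A x from map_sub (kaltonHom A) g x]
        exact hg
      have := hUp (g - x) h1
      simpa using this
    · exact ⟨Set.univ, Filter.univ_mem, fun h => absurd h hx⟩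
  choose U hU hUp using key
  refine ⟨⋃ x ∈ O, (fun y => y - kalton A x) ⁻¹' interior (U x),
    isOpen_biUnion fun x _ => isOpen_interior.preimage (continuous_id.sub continuous_const), ?_⟩
  ext y
  constructor
  · rintro ⟨g, hgO, rfl⟩
    refine ⟨Set.mem_biUnion hgO ?_, ⟨g, rfl⟩⟩
    simpa using mem_interior_iff_mem_nhds.mpr (hU g)
  · rintro ⟨hyV, g, rfl⟩
    obtain ⟨x, hxO, hyx⟩ := Set.mem_iUnion₂.mp hyV
    exact ⟨g, hUp x hxO g (interior_subset hyx), rfl⟩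

lemma acs_of_continuous (hc : Continuous (kalton A)) : AbsCauchySummable A := by
  classical
  intro U hU
  have h0 : (kalton A ⁻¹' U) ∈ 𝓝 (0 : SA A) := by
    refine hc.continuousAt.preimage_mem_nhds ?_
    rw [show kalton A 0 = 0 from map_zero (kaltonHom A)]
    exact hU
  obtain ⟨I, W, hW, hsub⟩ := nhds_zero_basis A h0
  refine ⟨I.image Subtype.val, ?_, ?_⟩
  · rintro g hg
    simp only [Finset.coe_image, Set.mem_image, Finset.mem_coe] at hg
    obtain ⟨a, -, rfl⟩ := hg
    exact a.2
  · intro g hg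
    have hex : ∃ f : SA A, (∀ a ∈ I, f.1 a = 0) ∧ kalton A f = g := by
      induction hg using AddSubgroup.closure_induction with
      | mem x hx =>
        have hxA : x ∈ A := hx.1
        refine ⟨sing ⟨x, hxA⟩ ⟨x, AddSubgroup.mem_zmultiples x⟩, fun a haI => ?_, ?_⟩
        · have hne : a ≠ ⟨x, hxA⟩ := by
            intro h
            exact hx.2 (Finset.mem_coe.mpr
              (Finset.mem_image.mpr ⟨a, haI, by rw [h]⟩))
          exact Pi.single_eq_of_ne hne _
        · rw [kalton_eq_sum _ (T := {(⟨x, hxA⟩ : A)}) fun a ha => ?_]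
          · simp [sing]
          · refine Finset.mem_singleton.mpr ?_
            by_contra h
            exact ha (Pi.single_eq_of_ne h _)
      | zero => exact ⟨0, fun a _ => rfl, map_zero (kaltonHom A)⟩
      | add x y hx hy ihx ihy =>
        obtain ⟨f₁, hf₁, hk₁⟩ := ihx
        obtain ⟨f₂, hf₂, hk₂⟩ := ihy
        refine ⟨f₁ + f₂, fun a haI => ?_, by rw [kalton_add, hk₁, hk₂]⟩
        have : (f₁ + f₂).1 a = f₁.1 a + f₂.1 a := rfl
        rw [this, hf₁ a haI, hf₂ a haI, add_zero]
      | neg x hx ihx =>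
        obtain ⟨f₁, hf₁, hk₁⟩ := ihx
        refine ⟨-f₁, fun a haI => ?_,
          by rw [show kalton A (-f₁) = -kalton A f₁ from map_neg (kaltonHom A) f₁, hk₁]⟩
        have : (-f₁).1 a = -(f₁.1 a) := rfl
        rw [this, hf₁ a haI, neg_zero]
    obtain ⟨f, hf0, hfk⟩ := hex
    have : f ∈ {f : SA A | ∀ a ∈ I, ((f.1 a : G)) ∈ W a} := by
      intro a haI
      rw [hf0 a haI]
      simpa using mem_of_mem_nhds (hW a)
    have := hsub this
    rwa [Set.mem_preimage, hfk] at this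

lemma topIndep_of (h0 : (0 : G) ∉ A) (hinj : Function.Injective (kalton A))
    (hc : Continuous (kalton A))
    (hopen : ∀ O : Set (SA A), IsOpen O →
      ∃ V : Set G, IsOpen V ∧ kalton A '' O = V ∩ Set.range (kalton A)) :
    TopIndep A := by
  classical
  refine ⟨h0, fun W hW => ?_⟩
  obtain ⟨F₀, hF₀A, hF₀c⟩ := acs_of_continuous hc W hW
  set T : Finset A := F₀.preimage Subtype.val (Subtype.val_injective.injOn) with hTdef
  set O : Set (SA A) := ⋂ a ∈ T, {f : SA A | ((f.1 a : G)) ∈ interior W} with hOdef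
  have hOopen : IsOpen O := isOpen_biInter_finset fun a _ =>
    isOpen_interior.preimage (coord_continuous a)
  obtain ⟨V, hVopen, hVeq⟩ := hopen O hOopen
  have h0O : (0 : SA A) ∈ O := Set.mem_iInter₂.mpr fun a _ => by
    simpa using mem_interior_iff_mem_nhds.mpr hW
  have hV0 : V ∈ 𝓝 (0 : G) := by
    refine hVopen.mem_nhds ?_
    have : kalton A 0 ∈ V ∩ Set.range (kalton A) := by
      rw [← hVeq]; exact ⟨0, h0O, rfl⟩
    rw [show kalton A 0 = 0 from map_zero (kaltonHom A)] at this
    exact this.1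
  refine ⟨V, hV0, fun F hFA z hsum a haF => ?_⟩
  have hκ : kalton A (comb A F z) = ∑ g ∈ F, z g • g := kalton_comb hFA z
  have hmem : kalton A (comb A F z) ∈ V ∩ Set.range (kalton A) := Set.mem_inter (by rwa [hκ]) (Set.mem_range_self _)
  rw [← hVeq] at hmem
  obtain ⟨f', hf'O, hf'⟩ := hmem
  have hfO : comb A F z ∈ O := hinj hf' ▸ hf'O
  have haA : a ∈ A := hFA haF
  by_cases hmemF : a ∈ F₀
  · have h' : (((comb A F z).1 ⟨a, haA⟩ : G)) ∈ interior W :=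
      Set.mem_iInter₂.mp hfO ⟨a, haA⟩ (Finset.mem_preimage.mpr hmemF)
    rw [comb_apply_mem ⟨a, haA⟩ haF] at h'
    exact interior_subset h'
  · have hmem' : a ∈ A \ ↑F₀ := ⟨haA, fun h => hmemF (Finset.mem_coe.mp h)⟩
    exact hF₀c (AddSubgroup.zsmul_mem _ (AddSubgroup.subset_closure hmem') _)

end Stmt11Aux


theorem stmt11 {G : Type*} [AddCommGroup G] [TopologicalSpace G] [IsTopologicalAddGroup G]
    [T2Space G] (A : Set G) (h0 : (0 : G) ∉ A) :
    (TopIndep A ∧ AbsCauchySummable A) ↔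
    (Function.Injective (kalton A) ∧ Continuous (kalton A) ∧
      ∀ O : Set ↥(FinSupp A (fun a => AddSubgroup.zmultiples (a : G))), IsOpen O →
        ∃ V : Set G, IsOpen V ∧ kalton A '' O = V ∩ Set.range (kalton A)) := by
  constructor
  · rintro ⟨hti, hacs⟩
    exact ⟨Stmt11Aux.injective_kalton hti, Stmt11Aux.continuous_kalton hacs,
      fun O hO => Stmt11Aux.open_kalton hti O hO⟩
  · rintro ⟨hinj, hc, hopen⟩
    exact ⟨Stmt11Aux.topIndep_of h0 hinj hc hopen, Stmt11Aux.acs_of_continuous hc⟩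
end

section
/- Let A be an infinite absolutely Cauchy summable subset of a Hausdorff abelian topological group G such that the cyclic subgroup ⟨a⟩ is discrete for every a ∈ A. Then A contains an infinite topologically independent subset. -/
open Filter Topology

section Aux
variable {G : Type*} [AddCommGroup G] [TopologicalSpace G] [IsTopologicalAddGroup G]

/-- One step of the recursive construction. -/
lemma stmt12_step (A : Set G) (hinf : A.Infinite)
    (hacs : ∀ U ∈ 𝓝 (0 : G), ∃ F : Finset G, ↑F ⊆ A ∧
      (AddSubgroup.closure (A \ ↑F) : Set G) ⊆ U)
    (hdisc : ∀ a ∈ A, DiscreteTopology (AddSubgroup.zmultiples a))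
    (U : Set G) (hU : U ∈ 𝓝 (0 : G)) (Fc : Finset G) :
    ∃ (b : G) (U' V : Set G) (Fn : Finset G),
      U' ∈ 𝓝 (0 : G) ∧ V ∈ 𝓝 (0 : G) ∧
      (∀ x ∈ U', ∀ y ∈ U', x + y ∈ U) ∧
      Fc ⊆ Fn ∧ ((AddSubgroup.closure (A \ ↑Fn) : Set G) ⊆ U') ∧
      b ∈ A ∧ b ∉ Fn ∧ V ⊆ U' ∧
      ∀ z : ℤ, z • b ∈ V → z • b = 0 := by
  classical
  obtain ⟨U', hU', hhalf⟩ := exists_nhds_zero_half hU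
  obtain ⟨F1, _, hF1⟩ := hacs U' hU'
  set Fn := Fc ∪ F1 with hFndef
  have hTn : (AddSubgroup.closure (A \ ↑Fn) : Set G) ⊆ U' := by
    refine Set.Subset.trans ?_ hF1
    have : A \ ↑Fn ⊆ A \ ↑F1 := by
      intro x hx
      exact ⟨hx.1, fun h => hx.2 (by simp [hFndef, h])⟩
    exact_mod_cast SetLike.coe_subset_coe.mpr (AddSubgroup.closure_mono this)
  obtain ⟨b, hbA, hbF⟩ := (hinf.diff (Fn.finite_toSet)).nonempty
  haveI := hdisc b hbA
  have hopen : IsOpen ({0} : Set (AddSubgroup.zmultiples b)) := isOpen_discrete _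
  rw [isOpen_induced_iff] at hopen
  obtain ⟨O, hO, hO0⟩ := hopen
  have h0O : (0 : G) ∈ O := by
    have : ((0 : AddSubgroup.zmultiples b) : G) ∈ O := by
      have : (0 : AddSubgroup.zmultiples b) ∈ (Subtype.val ⁻¹' O) := by
        rw [hO0]; rfl
      exact this
    simpa using this
  refine ⟨b, U', U' ∩ O, Fn, hU', inter_mem hU' (hO.mem_nhds h0O), hhalf, Finset.subset_union_left,
    hTn, hbA, hbF, Set.inter_subset_left, ?_⟩
  intro z hz
  have hmem : z • b ∈ AddSubgroup.zmultiples b :=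
    AddSubgroup.zsmul_mem _ (AddSubgroup.mem_zmultiples b) z
  have : (⟨z • b, hmem⟩ : AddSubgroup.zmultiples b) ∈ (Subtype.val ⁻¹' O) := hz.2
  rw [hO0] at this
  exact congrArg Subtype.val this

/-- The recursive construction. -/
lemma stmt12_build (A : Set G) (hinf : A.Infinite)
    (hacs : ∀ U ∈ 𝓝 (0 : G), ∃ F : Finset G, ↑F ⊆ A ∧
      (AddSubgroup.closure (A \ ↑F) : Set G) ⊆ U)
    (hdisc : ∀ a ∈ A, DiscreteTopology (AddSubgroup.zmultiples a)) :
    ∃ (bb : ℕ → G) (SU UU : ℕ → Set G) (FF : ℕ → Finset G),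
      (∀ n, UU n ∈ 𝓝 (0 : G)) ∧
      (∀ n, ∀ x ∈ UU n, ∀ y ∈ UU n, x + y ∈ SU n) ∧
      (∀ n, (AddSubgroup.closure (A \ ↑(FF n)) : Set G) ⊆ UU n) ∧
      (∀ n m, n ≤ m → bb m ∈ A \ ↑(FF n)) ∧
      Function.Injective bb ∧
      (∀ n (N : Finset ℕ), (∀ i ∈ N, i < n) → ∀ z : ℕ → ℤ,
        (∑ i ∈ N, z i • bb i) ∈ SU n → ∀ i ∈ N, z i • bb i = 0) := by
  classical
  choose fb fU' fV fFn hU'n hVn hhalf hFcsub hclos hbA hbF hVsub hVz using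
    stmt12_step A hinf hacs hdisc
  let state : ℕ → {p : Set G × Finset G // p.1 ∈ 𝓝 (0 : G)} := fun n =>
    Nat.rec ⟨(Set.univ, ∅), Filter.univ_mem⟩
      (fun _ p => ⟨(fV p.1.1 p.2 p.1.2, insert (fb p.1.1 p.2 p.1.2) (fFn p.1.1 p.2 p.1.2)),
        hVn p.1.1 p.2 p.1.2⟩) n
  let SU : ℕ → Set G := fun n => (state n).1.1
  let SF : ℕ → Finset G := fun n => (state n).1.2
  let bb : ℕ → G := fun n => fb (SU n) (state n).2 (SF n)
  let UU : ℕ → Set G := fun n => fU' (SU n) (state n).2 (SF n)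
  let VV : ℕ → Set G := fun n => fV (SU n) (state n).2 (SF n)
  let FF : ℕ → Finset G := fun n => fFn (SU n) (state n).2 (SF n)
  have hstepU : ∀ n, SU (n + 1) = VV n := fun n => rfl
  have hstepF : ∀ n, SF (n + 1) = insert (bb n) (FF n) := fun n => rfl
  have hUn : ∀ n, UU n ∈ 𝓝 (0 : G) := fun n => hU'n _ _ _
  have hhalfn : ∀ n, ∀ x ∈ UU n, ∀ y ∈ UU n, x + y ∈ SU n := fun n => hhalf _ _ _
  have hclosn : ∀ n, (AddSubgroup.closure (A \ ↑(FF n)) : Set G) ⊆ UU n := fun n => hclos _ _ _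
  have hbAn : ∀ n, bb n ∈ A := fun n => hbA _ _ _
  have hbFn : ∀ n, bb n ∉ FF n := fun n => hbF _ _ _
  have hVsubn : ∀ n, VV n ⊆ UU n := fun n => hVsub _ _ _
  have hVzn : ∀ n (z : ℤ), z • bb n ∈ VV n → z • bb n = 0 := fun n => hVz _ _ _
  have hSFsub : ∀ n, SF n ⊆ FF n := fun n => hFcsub _ _ _
  have hFFstep : ∀ n, FF n ⊆ FF (n + 1) := by
    intro n
    refine (Finset.subset_insert (bb n) (FF n)).trans ?_
    rw [← hstepF n]
    exact hSFsub (n + 1)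
  have hFFmono : ∀ {m n : ℕ}, m ≤ n → FF m ⊆ FF n := by
    intro m n h
    induction h with
    | refl => exact Finset.Subset.refl _
    | step h ih => exact ih.trans (hFFstep _)
  have btail : ∀ n m, n ≤ m → bb m ∈ A \ ↑(FF n) := by
    intro n m h
    exact ⟨hbAn m, fun hx => hbFn m (hFFmono h hx)⟩
  have hbmem : ∀ m n, m < n → bb m ∈ FF n := by
    intro m n h
    have h1 : bb m ∈ SF (m + 1) := by rw [hstepF m]; exact Finset.mem_insert_self _ _
    exact hFFmono h (hSFsub (m + 1) h1)
  have binj : Function.Injective bb := by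
    intro m n h
    by_contra hne
    rcases lt_or_gt_of_ne hne with hlt | hlt
    · exact hbFn n (h ▸ hbmem m n hlt)
    · exact hbFn m (h ▸ hbmem n m hlt)
  have Tsub : ∀ n (x : G), x ∈ AddSubgroup.closure (A \ ↑(FF n)) → x ∈ UU n := by
    intro n x hx
    exact hclosn n hx
  have Inv : ∀ n (N : Finset ℕ), (∀ i ∈ N, i < n) → ∀ z : ℕ → ℤ,
      (∑ i ∈ N, z i • bb i) ∈ SU n → ∀ i ∈ N, z i • bb i = 0 := by
    intro n
    induction n with
    | zero => exact fun N hN z _ i hi => absurd (hN i hi) (Nat.not_lt_zero i)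
    | succ n ih =>
      intro N hN z hsum i hi
      rw [hstepU n] at hsum
      by_cases hnN : n ∈ N
      · have hterm : ∀ j ∈ N.erase n, z j • bb j = 0 := by
          have hsum' : (∑ j ∈ N.erase n, z j • bb j) ∈ SU n := by
            have h1 : ∑ j ∈ N.erase n, z j • bb j
                = (∑ j ∈ N, z j • bb j) + (-(z n)) • bb n := by
              rw [← Finset.sum_erase_add N _ hnN, neg_smul]; abel
            rw [h1]
            refine hhalfn n _ (hVsubn n hsum) _ ?_
            exact Tsub n _ (AddSubgroup.zsmul_mem _
              (AddSubgroup.subset_closure (btail n n le_rfl)) _)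
          intro j hj
          refine ih (N.erase n) (fun j hj => ?_) z hsum' j hj
          exact lt_of_le_of_ne (Nat.lt_succ_iff.mp (hN j (Finset.mem_of_mem_erase hj)))
            (Finset.ne_of_mem_erase hj)
        have hzn : z n • bb n = 0 := by
          have heq : (∑ j ∈ N, z j • bb j) = z n • bb n := by
            rw [← Finset.sum_erase_add N _ hnN, Finset.sum_eq_zero hterm, zero_add]
          exact hVzn n (z n) (heq ▸ hsum)
        by_cases hin : i = n
        · rw [hin]; exact hzn
        · exact hterm i (Finset.mem_erase.mpr ⟨hin, hi⟩)
      · have hsum' : (∑ i ∈ N, z i • bb i) ∈ SU n := by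
          have h0 : (0 : G) ∈ UU n := mem_of_mem_nhds (hUn n)
          have := hhalfn n _ (hVsubn n hsum) 0 h0
          rwa [add_zero] at this
        refine ih N (fun j hj => ?_) z hsum' i hi
        exact lt_of_le_of_ne (Nat.lt_succ_iff.mp (hN j hj)) (fun e => hnN (e ▸ hj))
  exact ⟨bb, SU, UU, FF, hUn, hhalfn, hclosn, btail, binj, Inv⟩

end Aux

theorem stmt12 {G : Type*} [AddCommGroup G] [TopologicalSpace G] [IsTopologicalAddGroup G]
    [T2Space G] (A : Set G) (hinf : A.Infinite) (hacs : AbsCauchySummable A)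
    (hdisc : ∀ a ∈ A, DiscreteTopology (AddSubgroup.zmultiples a)) :
    ∃ B ⊆ A, B.Infinite ∧ TopIndep B := by
  classical
  set A₀ : Set G := A \ {0} with hA₀def
  have hinf₀ : A₀.Infinite := hinf.diff (Set.finite_singleton 0)
  have hacs₀ : ∀ U ∈ 𝓝 (0 : G), ∃ F : Finset G, ↑F ⊆ A₀ ∧
      (AddSubgroup.closure (A₀ \ ↑F) : Set G) ⊆ U := by
    intro U hU
    obtain ⟨F, hFA, hF⟩ := hacs U hU
    refine ⟨F.erase 0, ?_, ?_⟩
    · intro x hx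
      rw [Finset.coe_erase] at hx
      exact ⟨hFA hx.1, hx.2⟩
    · refine Set.Subset.trans ?_ hF
      have hsub : A₀ \ ↑(F.erase 0) ⊆ A \ ↑F := by
        intro x hx
        refine ⟨hx.1.1, fun hxF => hx.2 ?_⟩
        rw [Finset.coe_erase]
        exact ⟨hxF, hx.1.2⟩
      exact_mod_cast SetLike.coe_subset_coe.mpr (AddSubgroup.closure_mono hsub)
  have hdisc₀ : ∀ a ∈ A₀, DiscreteTopology (AddSubgroup.zmultiples a) :=
    fun a ha => hdisc a ha.1
  obtain ⟨bb, SU, UU, FF, hUn, hhalfn, hclosn, btail, binj, Inv⟩ :=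
    stmt12_build A₀ hinf₀ hacs₀ hdisc₀
  refine ⟨Set.range bb, ?_, Set.infinite_range_of_injective binj, ?_, ?_⟩
  · rintro x ⟨n, rfl⟩
    exact (btail 0 n (Nat.zero_le n)).1.1
  · rintro ⟨n, hn⟩
    exact (btail 0 n (Nat.zero_le n)).1.2 (by rw [hn]; rfl)
  · intro W hW
    obtain ⟨FW, hFWA, hFW⟩ := hacs₀ W hW
    have hSfin : (bb ⁻¹' ↑FW).Finite :=
      Set.Finite.preimage binj.injOn FW.finite_toSet
    set M : ℕ := hSfin.toFinset.sup id + 1 with hMdef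
    have hM : ∀ n, bb n ∈ FW → n < M := by
      intro n hn
      have hmem : n ∈ hSfin.toFinset := by
        rw [Set.Finite.mem_toFinset]
        exact hn
      exact Nat.lt_succ_of_le (Finset.le_sup (f := id) hmem)
    refine ⟨UU M, hUn M, ?_⟩
    intro F hFB z hsum
    have hinjOn : Set.InjOn bb (bb ⁻¹' ↑F) := binj.injOn
    set N : Finset ℕ := F.preimage bb hinjOn with hNdef
    have hsum' : ∑ n ∈ N, z (bb n) • bb n = ∑ a ∈ F, z a • a :=
      Finset.sum_preimage bb F hinjOn (fun a => z a • a)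
        (fun x hx hxr => absurd (hFB hx) hxr)
    have hsplit := Finset.sum_filter_add_sum_filter_not N (· < M)
      (fun n => z (bb n) • bb n)
    have hrest : (∑ n ∈ N.filter (fun n => ¬ n < M), z (bb n) • bb n)
        ∈ AddSubgroup.closure (A₀ \ ↑(FF M)) := by
      refine AddSubgroup.sum_mem _ ?_
      intro n hn
      have hnM : M ≤ n := Nat.le_of_not_lt (Finset.mem_filter.mp hn).2
      exact AddSubgroup.zsmul_mem _ (AddSubgroup.subset_closure (btail M n hnM)) _
    have hσ : (∑ n ∈ N.filter (fun n => n < M), z (bb n) • bb n) ∈ SU M := by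
      have heq : (∑ n ∈ N.filter (fun n => n < M), z (bb n) • bb n)
          = (∑ a ∈ F, z a • a) + (-(∑ n ∈ N.filter (fun n => ¬ n < M), z (bb n) • bb n)) := by
        rw [← hsum', ← hsplit]; abel
      rw [heq]
      exact hhalfn M _ hsum _ (hclosn M (AddSubgroup.neg_mem _ hrest))
    have hzero := Inv M (N.filter (fun n => n < M))
      (fun i hi => (Finset.mem_filter.mp hi).2) (fun n => z (bb n)) hσ
    intro a ha
    obtain ⟨n, hnr⟩ : a ∈ Set.range bb := hFB ha
    have hnN : n ∈ N := Finset.mem_preimage.mpr (by rw [hnr]; exact ha)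
    by_cases hlt : n < M
    · have h0 := hzero n (Finset.mem_filter.mpr ⟨hnN, hlt⟩)
      rw [← hnr, h0]
      exact mem_of_mem_nhds hW
    · have hbW : bb n ∉ FW := fun h => hlt (hM n h)
      have hmem : z a • a ∈ (AddSubgroup.closure (A₀ \ ↑FW) : Set G) := by
        rw [← hnr]
        have hmemd : bb n ∈ A₀ \ ↑FW :=
          ⟨(btail 0 n (Nat.zero_le n)).1, by simpa using hbW⟩
        exact AddSubgroup.zsmul_mem _ (AddSubgroup.subset_closure hmemd) _
      exact hFW hmem
end

section
/- Every absolutely summable subset of a Hausdorff abelian topological group is absolutely Cauchy summable, and in a complete group the converse holds: every absolutely Cauchy summable subset is absolutely summable. -/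
open Filter Topology

theorem stmt13 {G : Type*} [AddCommGroup G] [UniformSpace G] [IsUniformAddGroup G]
    [T2Space G] (A : Set G) :
    (AbsSummable A → AbsCauchySummable A) ∧
    (CompleteSpace G → AbsCauchySummable A → AbsSummable A) := by
  constructor
  · intro hs
    classical
    by_contra hac
    unfold AbsCauchySummable at hac
    push_neg at hac
    obtain ⟨U, hU, hUall⟩ := hac
    have key : ∀ F : Finset G, ↑F ⊆ A → ∃ c : G →₀ ℤ,
        ↑c.support ⊆ A \ ↑F ∧ (c.sum fun x z => z • x) ∉ U := by
      intro F hF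
      obtain ⟨g, hg, hgU⟩ := Set.not_subset.mp (hUall F hF)
      rw [SetLike.mem_coe, ← Submodule.span_int_eq_addSubgroupClosure] at hg
      obtain ⟨c, hc, rfl⟩ := Submodule.mem_span_set.mp hg
      exact ⟨c, hc, hgU⟩
    choose step hstep1 hstep2 using key
    let acc : ℕ → {F : Finset G // ↑F ⊆ A} := fun n =>
      Nat.rec ⟨∅, by simp⟩
        (fun _ p => ⟨p.1 ∪ (step p.1 p.2).support, by
          push_cast
          exact Set.union_subset p.2 ((hstep1 p.1 p.2).trans Set.diff_subset)⟩) n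
    set c : ℕ → G →₀ ℤ := fun n => step (acc n).1 (acc n).2 with hc
    have hsupp : ∀ n, ↑(c n).support ⊆ A \ ↑(acc n).1 := fun n => hstep1 _ _
    have hsum : ∀ n, ((c n).sum fun x z => z • x) ∉ U := fun n => hstep2 _ _
    have haccsucc : ∀ n, (acc (n + 1)).1 = (acc n).1 ∪ (c n).support := fun n => rfl
    have haccmono : ∀ m n, m ≤ n → (acc m).1 ⊆ (acc n).1 := by
      intro m n hmn
      induction n with
      | zero => simp_all
      | succ k ih =>
        rcases eq_or_lt_of_le hmn with h | h
        · exact h ▸ Finset.Subset.refl _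
        · exact (ih (Nat.lt_succ_iff.mp h)).trans
            (by rw [haccsucc]; exact Finset.subset_union_left)
    have hdisj : ∀ m n, m < n → Disjoint (c m).support (c n).support := by
      intro m n hmn
      rw [Finset.disjoint_left]
      intro x hxm hxn
      have h1 : x ∈ (acc n).1 :=
        haccmono (m + 1) n hmn (by rw [haccsucc]; exact Finset.mem_union_right _ hxm)
      exact (hsupp n hxn).2 h1
    have huniq : ∀ m n (x : G), x ∈ (c m).support → x ∈ (c n).support → m = n := by
      intro m n x hm hn
      rcases lt_trichotomy m n with h | h | h
      · exact absurd hn (Finset.disjoint_left.mp (hdisj m n h) hm)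
      · exact h
      · exact absurd hm (Finset.disjoint_left.mp (hdisj n m h) hn)
    set z : A → ℤ := fun a =>
      if h : ∃ n, (a : G) ∈ (c n).support then c h.choose a else 0 with hzdef
    have hz : ∀ n (a : A), (a : G) ∈ (c n).support → z a = c n (a : G) := by
      intro n a ha
      have h : ∃ n, (a : G) ∈ (c n).support := ⟨n, ha⟩
      rw [hzdef]
      simp only [dif_pos h]
      rw [huniq h.choose n a h.choose_spec ha]
    set t : ℕ → Finset A := fun n =>
      (c n).support.preimage Subtype.val Subtype.val_injective.injOn with htdef
    have htmem : ∀ n (a : A), a ∈ t n ↔ (a : G) ∈ (c n).support := by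
      intro n a; rw [htdef]; exact Finset.mem_preimage
    have htsum : ∀ n, (∑ a ∈ t n, z a • (a : G)) = (c n).sum fun x z => z • x := by
      intro n
      rw [Finset.sum_congr rfl fun a ha => by rw [hz n a ((htmem n a).mp ha)]]
      rw [htdef, Finsupp.sum]
      exact Finset.sum_preimage Subtype.val (c n).support _ (fun x => c n x • x)
        (fun x hx hxr => absurd ⟨⟨x, (hsupp n hx).1⟩, rfl⟩ hxr)
    obtain ⟨g, hg⟩ := hs z
    have hcauchy : CauchySeq fun s : Finset A => ∑ a ∈ s, z a • (a : G) := hg.cauchySeq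
    obtain ⟨s, hvan⟩ := cauchySeq_finset_iff_sum_vanishing.mp hcauchy U hU
    have : ∃ n, Disjoint (t n) s := by
      by_contra hno
      push_neg at hno
      choose f hf using fun n => Finset.not_disjoint_iff.mp (hno n)
      have hinj : Function.Injective f := by
        intro m n hmn
        exact huniq m n (f m) ((htmem m (f m)).mp (hf m).1)
          (hmn ▸ (htmem n (f n)).mp (hf n).1)
      exact (Set.infinite_of_injective_forall_mem hinj fun n => (hf n).2) s.finite_toSet
    obtain ⟨n, hn⟩ := this
    exact hsum n ((htsum n) ▸ hvan (t n) hn)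
  · intro _ hac z
    have : Summable (fun a : A => z a • (a : G)) := by
      rw [summable_iff_cauchySeq_finset, cauchySeq_finset_iff_sum_vanishing]
      intro U hU
      obtain ⟨F, hFA, hFU⟩ := hac U hU
      refine ⟨F.preimage Subtype.val Subtype.val_injective.injOn, fun t ht => ?_⟩
      refine hFU ?_
      rw [SetLike.mem_coe]
      refine AddSubgroup.sum_mem _ fun a ha => ?_
      refine AddSubgroup.zsmul_mem _ (AddSubgroup.subset_closure ?_) _
      exact ⟨a.2, fun h => Finset.disjoint_left.mp ht ha (Finset.mem_preimage.mpr h)⟩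
    exact this
end

section
/- For a subset A of a Hausdorff abelian topological group G, the following are equivalent: (i) for every neighbourhood U of 0 and every family {z_a : a ∈ A} of integers there is a finite F ⊆ A such that ∑_{a∈E} z_a·a ∈ U for every finite E ⊆ A \ F; (ii) A is absolutely Cauchy summable, i.e., for every neighbourhood U of 0 there is a finite F ⊆ A such that the subgroup generated by A \ F is contained in U. -/
open Filter Topology

theorem stmt14 {G : Type*} [AddCommGroup G] [TopologicalSpace G] [IsTopologicalAddGroup G]
    [T2Space G] (A : Set G) :
    (∀ U ∈ 𝓝 (0 : G), ∀ z : G → ℤ, ∃ F : Finset G, ↑F ⊆ A ∧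
      ∀ E : Finset G, ↑E ⊆ A \ ↑F → (∑ a ∈ E, z a • a) ∈ U)
    ↔ AbsCauchySummable A := by
  classical
  constructor
  · -- hard direction
    intro h U hU
    by_contra hcon
    push_neg at hcon
    -- Key: for every finite S, there is a finsupp combination supported in A \ S not in U.
    have key : ∀ S : Finset G, ∃ c : G →₀ ℤ, ↑c.support ⊆ A \ ↑S ∧
        c.sum (fun a z => z • a) ∉ U := by
      intro S
      set F : Finset G := S.filter (· ∈ A) with hFdef
      have hFA : ↑F ⊆ A := by
        intro a ha
        simp only [hFdef, Finset.coe_filter, Set.mem_setOf_eq] at ha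
        exact ha.2
      obtain ⟨x, hx, hxU⟩ := Set.not_subset.1 (hcon F hFA)
      have hdiff : A \ (↑F : Set G) = A \ ↑S := by
        ext a
        simp only [Set.mem_diff, hFdef, Finset.coe_filter, Set.mem_setOf_eq,
          Finset.mem_coe]
        tauto
      rw [hdiff] at hx
      rw [← Submodule.span_int_eq_addSubgroupClosure] at hx
      obtain ⟨c, hcs, hcsum⟩ := Submodule.mem_span_set.1 hx
      exact ⟨c, hcs, by rwa [hcsum]⟩
    -- recursive construction of disjoint-supported combinations
    let S : ℕ → Finset G := fun n => Nat.rec ∅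
      (fun _ p => p ∪ (key p).choose.support) n
    let c : ℕ → (G →₀ ℤ) := fun n => (key (S n)).choose
    have hSsucc : ∀ n, S (n + 1) = S n ∪ (c n).support := fun n => rfl
    have hc1 : ∀ n, ((c n).support : Set G) ⊆ A \ ((SetLike.coe (S n))) := by
      intro n; show ((key (S n)).choose.support : Set G) ⊆ A \ ((SetLike.coe (S n)))
      exact (key (S n)).choose_spec.1
    have hc2 : ∀ n, (c n).sum (fun a z => z • a) ∉ U := by
      intro n; show (key (S n)).choose.sum (fun a z => z • a) ∉ U
      exact (key (S n)).choose_spec.2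
    have hmono : ∀ m n, m ≤ n → S m ⊆ S n := by
      intro m n hmn
      induction n with
      | zero => simp_all
      | succ k ih =>
        rcases Nat.lt_or_ge m (k + 1) with hlt | hge
        · refine (ih (Nat.lt_succ_iff.1 hlt)).trans ?_
          rw [hSsucc]; exact Finset.subset_union_left
        · have : m = k + 1 := le_antisymm hmn hge
          subst this; rfl
    have hsub : ∀ k n, k < n → (c k).support ⊆ S n := by
      intro k n hkn
      refine Finset.Subset.trans ?_ (hmono (k + 1) n hkn)
      rw [hSsucc]; exact Finset.subset_union_right
    have hdisj : ∀ m n a, a ∈ (c m).support → a ∈ (c n).support → m = n := by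
      intro m n a ham han
      by_contra hne
      rcases Nat.lt_or_ge m n with hlt | hge
      · exact (hc1 n han).2 (hsub m n hlt ham)
      · have : n < m := lt_of_le_of_ne hge (Ne.symm hne)
        exact (hc1 m ham).2 (hsub n m this han)
    -- define z
    let z : G → ℤ := fun a => if h : ∃ n, a ∈ (c n).support then c h.choose a else 0
    have hz : ∀ n a, a ∈ (c n).support → z a = c n a := by
      intro n a ha
      have hex : ∃ m, a ∈ (c m).support := ⟨n, ha⟩
      have := hdisj hex.choose n a hex.choose_spec ha
      simp only [z, dif_pos hex, this]
    obtain ⟨F, _, hE⟩ := h U hU z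
    -- find n with support disjoint from F
    have : ∃ n, ∀ a ∈ (c n).support, a ∉ F := by
      by_contra hno
      push_neg at hno
      choose f hf1 hf2 using hno
      have hmaps : ∀ n ∈ Finset.range (F.card + 1), f n ∈ F := fun n _ => hf2 n
      obtain ⟨m, hm, n, hn, hmn, hfe⟩ :=
        Finset.exists_ne_map_eq_of_card_lt_of_maps_to (by simp) hmaps
      exact hmn (hdisj m n (f m) (hf1 m) (hfe ▸ hf1 n))
    obtain ⟨n, hn⟩ := this
    have hEsub : ↑(c n).support ⊆ A \ ↑F := by
      intro a ha
      exact ⟨(hc1 n ha).1, hn a ha⟩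
    have := hE (c n).support hEsub
    have hsum : ∑ a ∈ (c n).support, z a • a = (c n).sum (fun a z => z • a) := by
      rw [Finsupp.sum]
      exact Finset.sum_congr rfl fun a ha => by rw [hz n a ha]
    rw [hsum] at this
    exact hc2 n this
  · -- easy direction
    intro h U hU z
    obtain ⟨F, hFA, hFU⟩ := h U hU
    refine ⟨F, hFA, fun E hE => hFU ?_⟩
    exact AddSubgroup.sum_mem _ fun a ha =>
      AddSubgroup.zsmul_mem _ (AddSubgroup.subset_closure (hE ha)) _
end

section
/- Let A be an absolutely Cauchy summable subset of a Hausdorff topological vector space E. Then for every neighbourhood V of 0 in E there exists a finite set F ⊆ A such that the linear span of A \ F (over ℝ) is contained in V. -/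
open Filter Topology

lemma floor_div_tendsto_aux16 (r : ℝ) :
    Tendsto (fun n : ℕ => (⌊(n : ℝ) * r⌋ : ℝ) / n) atTop (𝓝 r) := by
  rw [tendsto_iff_dist_tendsto_zero]
  apply squeeze_zero' (Eventually.of_forall fun n => dist_nonneg)
    (g := fun n : ℕ => 1 / (n : ℝ))
  · filter_upwards [eventually_gt_atTop 0] with n hn
    have hn' : (0:ℝ) < n := by exact_mod_cast hn
    have key : (⌊(n:ℝ)*r⌋ : ℝ)/n - r = -(Int.fract ((n:ℝ)*r)/n) := by
      field_simp
      linarith [Int.self_sub_floor ((n:ℝ)*r)]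
    rw [Real.dist_eq, key, abs_neg,
      abs_of_nonneg (div_nonneg (Int.fract_nonneg _) hn'.le)]
    rw [div_le_div_iff₀ hn' hn']; nlinarith [Int.fract_lt_one ((n:ℝ)*r)]
  · exact tendsto_one_div_atTop_nhds_zero_nat

theorem stmt16 {E : Type*} [AddCommGroup E] [Module ℝ E] [TopologicalSpace E]
    [IsTopologicalAddGroup E] [ContinuousSMul ℝ E] [T2Space E]
    (A : Set E) (hA : AbsCauchySummable A) :
    ∀ V ∈ 𝓝 (0 : E), ∃ F : Finset E, ↑F ⊆ A ∧
      (Submodule.span ℝ (A \ ↑F) : Set E) ⊆ V := by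
  intro V hV
  obtain ⟨U, ⟨hU0, hUc, hUb⟩, hUV⟩ := (nhds_basis_closed_balanced ℝ E).mem_iff.mp hV
  obtain ⟨F, hFA, hFU⟩ := hA U hU0
  refine ⟨F, hFA, fun x hx => hUV ?_⟩
  obtain ⟨c, hcs, hcx⟩ := Submodule.mem_span_set.mp hx
  set g : ℕ → E := fun n => ∑ a ∈ c.support, ⌊(n : ℝ) * c a⌋ • a with hg
  have hgU : ∀ n : ℕ, g n ∈ U := fun n =>
    hFU (sum_mem fun a ha => zsmul_mem (AddSubgroup.subset_closure (hcs ha)) _)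
  have hmem : ∀ n : ℕ, 1 ≤ n → ((n : ℝ)⁻¹ • g n) ∈ U := by
    intro n hn
    refine hUb.smul_mem ?_ (hgU n)
    rw [norm_inv, Real.norm_natCast]
    have hn' : (1:ℝ) ≤ n := by exact_mod_cast hn
    rw [inv_le_one_iff₀]; right; exact hn'
  have htend : Tendsto (fun n : ℕ => (n : ℝ)⁻¹ • g n) atTop (𝓝 x) := by
    have : ∀ n : ℕ, (n : ℝ)⁻¹ • g n
        = ∑ a ∈ c.support, ((⌊(n : ℝ) * c a⌋ : ℝ) / n) • a := by
      intro n
      rw [hg, Finset.smul_sum]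
      refine Finset.sum_congr rfl fun a _ => ?_
      rw [← Int.cast_smul_eq_zsmul ℝ, smul_smul, div_eq_inv_mul]
    simp_rw [this]
    rw [← hcx, Finsupp.sum]
    exact tendsto_finset_sum _ fun a _ => (floor_div_tendsto_aux16 (c a)).smul_const a
  exact hUc.mem_of_tendsto htend (eventually_atTop.2 ⟨1, fun n hn => hmem n hn⟩)
end

section
/- If A is an absolutely Cauchy summable subset of a Hausdorff topological vector space E, then the linear subspace of E spanned by A is locally convex in its subspace topology. -/
open Filter Topology

section Aux

variable {E : Type*} [AddCommGroup E] [Module ℝ E]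

/-- A rational linear combination of elements of `A'` lies in any balanced set containing the
subgroup generated by `A'`. -/
lemma rat_comb_mem {A' W : Set E} (hW : Balanced ℝ W)
    (hG : (AddSubgroup.closure A' : Set E) ⊆ W)
    (s : Finset E) (hs : ↑s ⊆ A') (r : E → ℚ) :
    (∑ i ∈ s, (r i : ℝ) • i) ∈ W := by
  classical
  set q : ℕ := ∏ i ∈ s, (r i).den with hq
  have hq1 : 1 ≤ q := Finset.one_le_prod' fun i _ => (r i).pos
  have key : ∀ i ∈ s, ∃ n : ℤ, ((q : ℚ)) * (r i) = n := by
    intro i hi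
    have hd : ((r i).den : ℤ) ∣ (q : ℤ) :=
      Int.natCast_dvd_natCast.mpr (Finset.dvd_prod_of_mem _ hi)
    obtain ⟨m, hm⟩ := hd
    refine ⟨(r i).num * m, ?_⟩
    have hden : ((r i).den : ℚ) ≠ 0 := by
      exact_mod_cast (r i).den_nz
    have h1 : ((q : ℤ) : ℚ) = ((r i).den : ℚ) * (m : ℚ) := by exact_mod_cast hm
    push_cast at h1 ⊢
    rw [h1]
    have h2 : (r i) * ((r i).den : ℚ) = ((r i).num : ℚ) := Rat.mul_den_eq_num _
    calc ((r i).den : ℚ) * m * r i = (r i * ((r i).den : ℚ)) * m := by ring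
    _ = ((r i).num : ℚ) * m := by rw [h2]
  have hmem : (q : ℝ) • (∑ i ∈ s, (r i : ℝ) • i) ∈ AddSubgroup.closure A' := by
    rw [Finset.smul_sum]
    refine AddSubgroup.sum_mem _ fun i hi => ?_
    obtain ⟨n, hn⟩ := key i hi
    have h1 : (q : ℝ) • ((r i : ℝ) • i) = ((n : ℤ) : ℝ) • i := by
      rw [smul_smul]
      congr 1
      exact_mod_cast hn
    rw [h1, Int.cast_smul_eq_zsmul]
    exact AddSubgroup.zsmul_mem _ (AddSubgroup.subset_closure (hs hi)) _
  have hq0 : (q : ℝ) ≠ 0 := by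
    have : (0:ℝ) < q := by exact_mod_cast hq1.trans_lt' Nat.zero_lt_one
    exact this.ne'
  have hrw : (∑ i ∈ s, (r i : ℝ) • i) = (q : ℝ)⁻¹ • ((q:ℝ) • ∑ i ∈ s, (r i:ℝ) • i) :=
    (inv_smul_smul₀ hq0 _).symm
  rw [hrw]
  refine hW.smul_mem ?_ (hG hmem)
  have h1q : (1:ℝ) ≤ (q:ℝ) := by exact_mod_cast hq1
  rw [norm_inv, Real.norm_natCast]
  exact inv_le_one_of_one_le₀ h1q

variable [TopologicalSpace E] [IsTopologicalAddGroup E] [ContinuousSMul ℝ E]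

/-- The real span of `A'` lies in the closure of any balanced set containing the subgroup
generated by `A'`. -/
lemma span_subset_closure_balanced {A' W : Set E} (hW : Balanced ℝ W)
    (hG : (AddSubgroup.closure A' : Set E) ⊆ W) :
    (Submodule.span ℝ A' : Set E) ⊆ closure W := by
  classical
  intro y hy
  rw [SetLike.mem_coe, Submodule.mem_span_set] at hy
  obtain ⟨c, hsupp, rfl⟩ := hy
  rw [mem_closure_iff]
  intro O hO hyO
  set ι := {x // x ∈ c.support}
  set φ : (ι → ℝ) → E := fun t => ∑ i : ι, t i • (i : E) with hφ
  have hcont : Continuous φ :=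
    continuous_finset_sum _ fun i _ => (continuous_apply i).smul continuous_const
  have hval : φ (fun i => c i) = c.sum fun mi r => r • mi := by
    rw [Finsupp.sum, hφ]
    exact Finset.sum_coe_sort c.support (fun i => c i • i)
  have hne : (fun i : ι => c ↑i) ∈ φ ⁻¹' O := by
    rw [Set.mem_preimage, hval]; exact hyO
  have hdense : Dense (Set.pi Set.univ fun _ : ι => Set.range ((↑) : ℚ → ℝ)) :=
    dense_pi _ fun i _ => Rat.denseRange_cast
  obtain ⟨t, htpi, htO⟩ := hdense.exists_mem_open (hO.preimage hcont) ⟨_, hne⟩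
  choose r hr using fun i : ι => (htpi i (Set.mem_univ i) : t i ∈ Set.range _)
  refine ⟨φ t, htO, ?_⟩
  set R : E → ℚ := fun x => if h : x ∈ c.support then r ⟨x, h⟩ else 0 with hR
  have hφt : φ t = ∑ i ∈ c.support, (R i : ℝ) • i := by
    rw [hφ]
    rw [← Finset.sum_coe_sort c.support (fun i => (R i : ℝ) • i)]
    refine Finset.sum_congr rfl fun i _ => ?_
    have : R ↑i = r i := by rw [hR]; exact dif_pos i.2
    rw [this, hr i]
  rw [hφt]
  exact rat_comb_mem hW hG c.support hsupp R

/-- For every neighbourhood of zero there is a finite `F ⊆ A` such that the closure of the span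
of `A \ F` is contained in it. -/
lemma tail_span_small {A : Set E} (hA : AbsCauchySummable A) {U : Set E} (hU : U ∈ 𝓝 0) :
    ∃ F : Finset E, ↑F ⊆ A ∧ closure (Submodule.span ℝ (A \ ↑F) : Set E) ⊆ U := by
  obtain ⟨S, hS, hSU⟩ := exists_nhds_zero_half hU
  obtain ⟨W, ⟨hWn, hWb⟩, hWS⟩ := (nhds_basis_balanced ℝ E).mem_iff.mp hS
  obtain ⟨F, hFA, hFW⟩ := hA W hWn
  refine ⟨F, hFA, ?_⟩
  have h1 : (Submodule.span ℝ (A \ ↑F) : Set E) ⊆ closure W :=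
    span_subset_closure_balanced hWb hFW
  have h2 : closure (Submodule.span ℝ (A \ ↑F) : Set E) ⊆ closure W :=
    closure_minimal h1 isClosed_closure
  intro z hz
  have hz' := h2 hz
  have hnb : (fun y => z - y) ⁻¹' W ∈ 𝓝 z := by
    have hc : ContinuousAt (fun y => z - y) z := (continuous_const.sub continuous_id).continuousAt
    apply hc.preimage_mem_nhds
    simpa using hWn
  obtain ⟨w, hw1, hw2⟩ := mem_closure_iff_nhds.mp hz' _ hnb
  have := hSU _ (hWS hw1) _ (hWS hw2)
  simpa using this

end Aux

theorem stmt17 {E : Type*} [AddCommGroup E] [Module ℝ E] [TopologicalSpace E]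
    [IsTopologicalAddGroup E] [ContinuousSMul ℝ E] [T2Space E]
    (A : Set E) (hA : AbsCauchySummable A) :
    LocallyConvexSpace ℝ ↥(Submodule.span ℝ A) := by
  classical
  set P := Submodule.span ℝ A with hPdef
  rw [locallyConvexSpace_iff_exists_convex_subset_zero]
  intro U₀ hU₀
  obtain ⟨U, hU, hUsub⟩ := (mem_nhds_subtype _ _ _).mp hU₀
  rw [show ((0 : ↥P) : E) = 0 from rfl] at hU
  obtain ⟨S, hS, hSU⟩ := exists_nhds_zero_half hU
  obtain ⟨F, hFA, hFcl⟩ := tail_span_small hA hS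
  set L : Submodule ℝ E := Submodule.span ℝ (A \ ↑F) with hLdef
  have hLP : L ≤ P := Submodule.span_mono Set.diff_subset
  have hMP : Submodule.span ℝ (↑F : Set E) ≤ P := Submodule.span_mono hFA
  set LX : Submodule ℝ ↥P := L.comap P.subtype with hLX
  set L₁ : Submodule ℝ ↥P := LX.topologicalClosure with hL₁
  set MX : Submodule ℝ ↥P := (Submodule.span ℝ (↑F : Set E)).comap P.subtype with hMX
  haveI : FiniteDimensional ℝ ↥(Submodule.span ℝ (↑F : Set E)) :=
    FiniteDimensional.span_of_finite ℝ F.finite_toSet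
  haveI hMXfd : FiniteDimensional ℝ ↥MX :=
    LinearEquiv.finiteDimensional (Submodule.comapSubtypeEquivOfLe hMP).symm
  have hsupX : MX ⊔ LX = ⊤ := by
    rw [eq_top_iff]
    rintro ⟨x, hx⟩ -
    have hx' : x ∈ Submodule.span ℝ (↑F : Set E) ⊔ L := by
      rw [← Submodule.span_union]
      have hcup : (↑F : Set E) ∪ (A \ ↑F) = A := Set.union_diff_cancel hFA
      rw [hcup]
      exact hx
    obtain ⟨m, hm, l, hl, hml⟩ := Submodule.mem_sup.mp hx'
    refine Submodule.mem_sup.mpr ⟨⟨m, hMP hm⟩, ?_, ⟨l, hLP hl⟩, ?_, ?_⟩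
    · exact Submodule.mem_comap.mpr hm
    · exact Submodule.mem_comap.mpr hl
    · exact Subtype.ext (by simpa using hml)
  have hsup : MX ⊔ L₁ = ⊤ := by
    rw [eq_top_iff, ← hsupX]
    exact sup_le_sup_left LX.le_topologicalClosure MX
  haveI hL₁c : IsClosed (L₁ : Set ↥P) := LX.isClosed_topologicalClosure
  haveI : T3Space (↥P ⧸ L₁) := Submodule.t3_quotient_of_isClosed L₁
  have hbot : Submodule.map L₁.mkQ L₁ = ⊥ := by
    rw [eq_bot_iff]
    rintro - ⟨z, hz, rfl⟩
    simp [Submodule.mkQ_apply, (Submodule.Quotient.mk_eq_zero L₁).mpr hz]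
  haveI hQfd : FiniteDimensional ℝ (↥P ⧸ L₁) := by
    have hsurj : Function.Surjective ((L₁.mkQ).comp MX.subtype) := by
      rw [← LinearMap.range_eq_top, LinearMap.range_comp, Submodule.range_subtype]
      have h1 : Submodule.map L₁.mkQ MX ⊔ Submodule.map L₁.mkQ L₁ = ⊤ := by
        rw [← Submodule.map_sup, hsup, Submodule.map_top, Submodule.range_mkQ]
      rwa [hbot, sup_bot_eq] at h1
    exact Module.Finite.of_surjective _ hsurj
  obtain ⟨σ, hσ⟩ := (L₁.mkQ).exists_rightInverse_of_surjective
    (by rw [Submodule.range_mkQ])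
  have hσc : Continuous σ := σ.continuous_of_finiteDimensional
  have hSX : (Subtype.val ⁻¹' S : Set ↥P) ∈ 𝓝 0 :=
    continuous_subtype_val.continuousAt.preimage_mem_nhds (by simpa using hS)
  have hT : σ ⁻¹' (Subtype.val ⁻¹' S) ∈ 𝓝 (0 : ↥P ⧸ L₁) :=
    hσc.continuousAt.preimage_mem_nhds (by rw [map_zero σ]; exact hSX)
  obtain ⟨D, hD, hDc, hDT⟩ : ∃ D ∈ 𝓝 (0 : ↥P ⧸ L₁), Convex ℝ D ∧
      D ⊆ σ ⁻¹' (Subtype.val ⁻¹' S) := by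
    set n := Module.finrank ℝ (↥P ⧸ L₁) with hn
    have e : (↥P ⧸ L₁) ≃L[ℝ] (Fin n → ℝ) :=
      ContinuousLinearEquiv.ofFinrankEq (by rw [Module.finrank_fin_fun])
    have hT' : e.symm ⁻¹' (σ ⁻¹' (Subtype.val ⁻¹' S)) ∈ 𝓝 (0 : Fin n → ℝ) :=
      e.symm.continuous.continuousAt.preimage_mem_nhds (by rw [map_zero]; exact hT)
    obtain ⟨D₀, hD₀, hD₀c, hD₀T⟩ :=
      (locallyConvexSpace_iff_exists_convex_subset_zero ℝ (Fin n → ℝ)).mp inferInstance _ hT'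
    refine ⟨e ⁻¹' D₀, e.continuous.continuousAt.preimage_mem_nhds (by rw [map_zero]; exact hD₀),
      hD₀c.linear_preimage (e : (↥P ⧸ L₁) →ₗ[ℝ] (Fin n → ℝ)), fun d hd => ?_⟩
    have h3 := hD₀T hd
    simpa using h3
  refine ⟨L₁.mkQ ⁻¹' D, ?_, ?_, ?_⟩
  · exact (L₁.isOpenQuotientMap_mkQ.continuous).continuousAt.preimage_mem_nhds
      (by rw [show L₁.mkQ (0 : ↥P) = 0 from map_zero _]; exact hD)
  · exact hDc.linear_preimage L₁.mkQ
  · intro x hx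
    have hy : σ (L₁.mkQ x) ∈ Subtype.val ⁻¹' S := hDT hx
    have hker : x - σ (L₁.mkQ x) ∈ L₁ := by
      have h0 : L₁.mkQ (x - σ (L₁.mkQ x)) = 0 := by
        rw [map_sub]
        have h1 := LinearMap.congr_fun hσ (L₁.mkQ x)
        simp only [LinearMap.coe_comp, Function.comp_apply, LinearMap.id_coe, id_eq] at h1
        rw [h1, sub_self]
      rwa [Submodule.mkQ_apply, Submodule.Quotient.mk_eq_zero] at h0
    have hsub : Subtype.val '' (L₁ : Set ↥P) ⊆ closure (L : Set E) := by
      have h3 : Subtype.val '' (LX : Set ↥P) ⊆ (L : Set E) := by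
        rintro - ⟨z, hz, rfl⟩
        exact hz
      calc Subtype.val '' (L₁ : Set ↥P) = Subtype.val '' closure (LX : Set ↥P) := by
            rw [hL₁]; rfl
      _ ⊆ closure (Subtype.val '' (LX : Set ↥P)) :=
            image_closure_subset_closure_image continuous_subtype_val
      _ ⊆ closure (L : Set E) := closure_mono h3
    have h2 : ((x - σ (L₁.mkQ x) : ↥P) : E) ∈ S :=
      hFcl (hsub ⟨_, hker, rfl⟩)
    have hxU : (↑x : E) ∈ U := by
      have h4 := hSU _ hy _ h2
      have h5 : ((σ (L₁.mkQ x) : ↥P) : E) + ((x - σ (L₁.mkQ x) : ↥P) : E) = (x : E) := by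
        push_cast
        abel
      rwa [h5] at h4
    exact hUsub hxU
end
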